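/- arXiv:1907.06019 — 7 statements merged into one kernel-verified Lean document; each statement's English description precedes it below -/
import Mathlib

section
/- Let V = ℝ^N and let C_1, …, C_m be proper linear subspaces of V. Then there exists a nonzero real polynomial G in N² variables f_{ij} (1 ≤ i, j ≤ N) such that whenever a real N×N matrix F = (f_{ij}) satisfies G(F) ≠ 0, the matrix F is invertible and for every subset J ⊆ {1,…,N} and every 1 ≤ i ≤ m, the projection π^F_J satisfies dim π^F_J(C_i) = min{dim C_i, |J|}. -/
open Matrix MvPolynomial Module Submodule Set

noncomputable section GenProjAux

namespace GenProj

variable {N d : ℕ}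

/-- Matrix with prescribed columns. -/
def colMat (c : Fin d → (Fin N → ℝ)) : Matrix (Fin N) (Fin d) ℝ :=
  Matrix.of fun k j => c j k

/-- The generic matrix of variables. -/
def Xmat (N : ℕ) : Matrix (Fin N) (Fin N) (MvPolynomial (Fin N × Fin N) ℝ) :=
  Matrix.of fun p q => MvPolynomial.X (p, q)

lemma Xmat_map_eval (F : Matrix (Fin N) (Fin N) ℝ) :
    (Xmat N).map (MvPolynomial.eval fun p : Fin N × Fin N => F p.1 p.2) = F := by
  ext p q; simp [Xmat]

/-- The minor polynomial. -/
def minorPoly (c : Fin d → (Fin N → ℝ)) (σ : Fin d ↪ Fin N) :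
    MvPolynomial (Fin N × Fin N) ℝ :=
  ((((Xmat N).adjugate * (colMat c).map MvPolynomial.C)).submatrix σ id).det

lemma eval_minorPoly (c : Fin d → (Fin N → ℝ)) (σ : Fin d ↪ Fin N)
    (F : Matrix (Fin N) (Fin N) ℝ) :
    MvPolynomial.eval (fun p : Fin N × Fin N => F p.1 p.2) (minorPoly c σ)
      = ((F.adjugate * colMat c).submatrix σ id).det := by
  set φ : MvPolynomial (Fin N × Fin N) ℝ →+* ℝ :=
    (MvPolynomial.eval (fun p : Fin N × Fin N => F p.1 p.2)) with hφ
  have h1 : φ (minorPoly c σ)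
      = (((((Xmat N).adjugate * (colMat c).map MvPolynomial.C)).submatrix σ id).map φ).det :=
    RingHom.map_det φ _
  rw [show MvPolynomial.eval (fun p : Fin N × Fin N => F p.1 p.2) (minorPoly c σ) = φ (minorPoly c σ) from rfl, h1]
  congr 1
  refine (Matrix.submatrix_map (⇑φ) σ id _).symm.trans ?_
  have hadj : (Xmat N).adjugate.map φ = F.adjugate := by
    have := RingHom.map_adjugate φ (Xmat N)
    rw [RingHom.mapMatrix_apply, RingHom.mapMatrix_apply] at this
    rw [this, Xmat_map_eval]
  have hB : ((colMat c).map MvPolynomial.C).map φ = colMat c := by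
    ext k j; simp [colMat, hφ]
  have hm : (((Xmat N).adjugate * (colMat c).map MvPolynomial.C :
      Matrix (Fin N) (Fin d) (MvPolynomial (Fin N × Fin N) ℝ))).map φ = F.adjugate * colMat c := by
    have hmm := Matrix.map_mul (f := φ) (L := (Xmat N).adjugate) (M := (colMat c).map MvPolynomial.C)
    rw [hadj, hB] at hmm
    exact hmm
  exact congrArg (fun M => M.submatrix σ id) hm

lemma indep_rows (A : Matrix (Fin N) (Fin d) ℝ) (hd : d ≤ N)
    (hA : ∀ σ : Fin d ↪ Fin N, (A.submatrix σ id).det ≠ 0)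
    (S : Finset (Fin N)) (hS : S.card ≤ d) :
    LinearIndependent ℝ (fun x : S => A x) := by
  classical
  obtain ⟨T, hST, hT⟩ := Finset.exists_superset_card_eq hS (by simp [hd])
  set σe := T.orderIsoOfFin hT
  have hinj : Function.Injective (fun a : Fin d => (σe a : Fin N)) := by
    intro a b h
    exact σe.injective (Subtype.ext h)
  set emb : Fin d ↪ Fin N := ⟨fun a => (σe a : Fin N), hinj⟩
  have hunit : IsUnit (A.submatrix emb id) := by
    have := hA emb
    exact (Matrix.isUnit_iff_isUnit_det _).mpr (Ne.isUnit this)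
  have hIT : LinearIndependent ℝ (fun i : Fin d => A (emb i)) :=
    Matrix.linearIndependent_rows_iff_isUnit.mpr hunit
  have hT' : LinearIndependent ℝ (fun x : T => A (x : Fin N)) :=
    (linearIndependent_equiv (σe.toEquiv) (f := fun x : T => A (x : Fin N))).mp hIT
  exact hT'.comp (fun x : {x // x ∈ S} => (⟨x.1, hST x.2⟩ : {x // x ∈ T}))
    (by intro a b h
        apply Subtype.ext
        simpa using h)

lemma finrank_span_image (A : Matrix (Fin N) (Fin d) ℝ) (hd : d ≤ N)
    (hA : ∀ σ : Fin d ↪ Fin N, (A.submatrix σ id).det ≠ 0)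
    (S : Finset (Fin N)) (hS : S.card ≤ d) :
    finrank ℝ (span ℝ ((fun j => A j) '' (S : Set (Fin N)))) = S.card := by
  have h := indep_rows A hd hA S hS
  have hr : Set.range (fun x : S => A x) = (fun j => A j) '' (S : Set (Fin N)) := by
    ext y; constructor
    · rintro ⟨x, rfl⟩; exact ⟨x.1, by simp, rfl⟩
    · rintro ⟨j, hj, rfl⟩; exact ⟨⟨j, by simpa using hj⟩, rfl⟩
  have := finrank_span_eq_card h
  rw [hr] at this
  rw [this, Fintype.card_coe]

lemma rank_diagonal_mul (A : Matrix (Fin N) (Fin d) ℝ) (hd : d ≤ N)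
    (hA : ∀ σ : Fin d ↪ Fin N, (A.submatrix σ id).det ≠ 0)
    (J : Finset (Fin N)) :
    (Matrix.diagonal (fun j => if j ∈ J then (1:ℝ) else 0) * A).rank = min d J.card := by
  classical
  set D := Matrix.diagonal (fun j => if j ∈ J then (1:ℝ) else 0) with hD
  have hDA : ∀ j, (D * A) j = if j ∈ J then A j else 0 := by
    intro j; ext k
    rw [hD, Matrix.diagonal_mul]
    split_ifs <;> simp
  have h1 : (D * A).rank = finrank ℝ (span ℝ (Set.range (D * A))) := by
    rw [← Matrix.rank_transpose, Matrix.rank_eq_finrank_span_cols]; rfl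
  have h2 : span ℝ (Set.range (D * A)) = span ℝ ((fun j => A j) '' (J : Set (Fin N))) := by
    apply le_antisymm
    · rw [span_le]
      rintro _ ⟨j, rfl⟩
      rw [hDA]
      split_ifs with hj
      · exact subset_span ⟨j, by simpa using hj, rfl⟩
      · exact zero_mem _
    · rw [span_le]
      rintro _ ⟨j, hj, rfl⟩
      have : (fun j => A j) j = (D * A) j := by
        simp only []
        rw [hDA]; simp [Finset.mem_coe.mp hj]
      rw [this]
      exact subset_span ⟨j, rfl⟩
  rw [h1, h2]
  rcases le_total J.card d with hJd | hdJ
  · rw [min_eq_right hJd]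
    exact finrank_span_image A hd hA J hJd
  · rw [min_eq_left hdJ]
    apply le_antisymm
    · have hle : finrank ℝ (span ℝ ((fun j => A j) '' (J : Set (Fin N))))
          ≤ finrank ℝ (Fin d → ℝ) := Submodule.finrank_le _
      simpa [Module.finrank_fintype_fun_eq_card] using hle
    · obtain ⟨S, hSJ, hS⟩ := Finset.exists_subset_card_eq hdJ
      have hfin := finrank_span_image A hd hA S hS.le
      rw [hS] at hfin
      have hmono : finrank ℝ (span ℝ ((fun j => A j) '' (S : Set (Fin N))))
          ≤ finrank ℝ (span ℝ ((fun j => A j) '' (J : Set (Fin N)))) :=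
        Submodule.finrank_mono (span_mono (Set.image_mono (by exact_mod_cast hSJ)))
      rw [hfin] at hmono
      exact hmono


lemma exists_basis_prescribed (c : Fin d → (Fin N → ℝ)) (hc : LinearIndependent ℝ c)
    (σ : Fin d ↪ Fin N) :
    ∃ v : Basis (Fin N) ℝ (Fin N → ℝ), ∀ k, v (σ k) = c k := by
  classical
  obtain ⟨q, hq⟩ := Submodule.exists_isCompl (span ℝ (Set.range c))
  set r := finrank ℝ q with hr
  have hspan : finrank ℝ (span ℝ (Set.range c)) = d := by
    rw [finrank_span_eq_card hc, Fintype.card_fin]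
  have hdr : d + r = N := by
    have h1 := Submodule.finrank_add_eq_of_isCompl hq
    rw [hspan, Module.finrank_fintype_fun_eq_card, Fintype.card_fin] at h1
    omega
  set b0 : Basis (Fin d) ℝ (span ℝ (Set.range c)) := Basis.span hc
  set bq : Basis (Fin r) ℝ q := Module.finBasis ℝ q
  set bb : Basis (Fin d ⊕ Fin r) ℝ (Fin N → ℝ) :=
    (b0.prod bq).map (Submodule.prodEquivOfIsCompl _ _ hq)
  have hcard : Fintype.card {x : Fin N // x ∉ Set.range σ} = r := by
    rw [Fintype.card_subtype_compl]
    have h2 : Fintype.card {x : Fin N // x ∈ Set.range σ} = d := by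
      exact (Fintype.card_congr (Equiv.ofInjective σ σ.injective)).symm.trans
        (Fintype.card_fin d)
    rw [h2, Fintype.card_fin]
    omega
  set eL : Fin d ≃ {x : Fin N // x ∈ Set.range σ} :=
    (Equiv.ofInjective σ σ.injective).trans (Equiv.setCongr rfl)
  set eR : Fin r ≃ {x : Fin N // x ∉ Set.range σ} :=
    Fintype.equivOfCardEq (by rw [hcard, Fintype.card_fin])
  set e : (Fin d ⊕ Fin r) ≃ Fin N :=
    (Equiv.sumCongr eL eR).trans (Equiv.sumCompl (fun x => x ∈ Set.range σ))
  have he : ∀ k, e (Sum.inl k) = σ k := by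
    intro k
    simp [e, eL, Equiv.sumCompl_apply_inl, Equiv.ofInjective_apply]
  refine ⟨bb.reindex e, fun k => ?_⟩
  rw [Basis.reindex_apply]
  have hsymm : e.symm (σ k) = Sum.inl k := by
    rw [Equiv.symm_apply_eq, he]
  rw [hsymm]
  show (Submodule.prodEquivOfIsCompl _ _ hq) ((b0.prod bq) (Sum.inl k)) = c k
  have hb : (b0.prod bq) (Sum.inl k) = (b0 k, 0) := by
    apply Prod.ext
    · simp [Basis.prod_apply_inl_fst]
    · simp [Basis.prod_apply_inl_snd]
  rw [hb, Submodule.coe_prodEquivOfIsCompl']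
  simp only [ZeroMemClass.coe_zero, add_zero]
  exact congrArg Subtype.val (Module.Basis.span_apply hc k)

lemma minorPoly_ne_zero (c : Fin d → (Fin N → ℝ)) (hc : LinearIndependent ℝ c)
    (σ : Fin d ↪ Fin N) : minorPoly c σ ≠ 0 := by
  classical
  obtain ⟨v, hv⟩ := exists_basis_prescribed c hc σ
  set F : Matrix (Fin N) (Fin N) ℝ := (Pi.basisFun ℝ (Fin N)).toMatrix v with hFdef
  have hF : ∀ p q, F p q = v q p := by
    intro p q
    rw [hFdef, Basis.toMatrix_apply, Pi.basisFun_repr]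
  have hinvF : Invertible F := (Pi.basisFun ℝ (Fin N)).invertibleToMatrix v
  have hdet : IsUnit F.det := (Matrix.isUnit_iff_isUnit_det F).mp (isUnit_of_invertible F)
  have hd0 : F.det ≠ 0 := hdet.ne_zero
  have hFe : ∀ k, F *ᵥ Pi.single (σ k) (1:ℝ) = c k := by
    intro k; ext p
    simp [Matrix.mulVec_single, hF, hv]
  have hinv : ∀ k, F⁻¹ *ᵥ c k = Pi.single (σ k) (1:ℝ) := by
    intro k
    rw [← hFe k, Matrix.mulVec_mulVec, Matrix.nonsing_inv_mul F hdet, Matrix.one_mulVec]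
  intro h0
  have heval := eval_minorPoly c σ F
  rw [h0, map_zero] at heval
  have hadj : F.adjugate = F.det • F⁻¹ := by
    rw [Matrix.inv_def, smul_smul, Ring.inverse_eq_inv, mul_inv_cancel₀ hd0, one_smul]
  have hsub : (F⁻¹ * colMat c).submatrix σ id = (1 : Matrix (Fin d) (Fin d) ℝ) := by
    ext a b
    have hab : (F⁻¹ * colMat c) (σ a) b = (F⁻¹ *ᵥ c b) (σ a) := by
      simp [Matrix.mul_apply, Matrix.mulVec, colMat, dotProduct]
    rw [Matrix.submatrix_apply, id_eq, hab, hinv]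
    simp [Pi.single_apply, Matrix.one_apply, EmbeddingLike.apply_eq_iff_eq, eq_comm]
  have hval : ((F.adjugate * colMat c).submatrix σ id).det = F.det ^ d := by
    rw [hadj, Matrix.smul_mul]
    have : ((F.det • (F⁻¹ * colMat c)).submatrix σ id)
        = F.det • ((F⁻¹ * colMat c).submatrix σ id) := rfl
    rw [this, hsub, Matrix.det_smul, Matrix.det_one, Fintype.card_fin, mul_one]
  rw [hval] at heval
  exact (pow_ne_zero d hd0) heval.symm

lemma toLin'_eq_mulVecLin {n k : ℕ} (M : Matrix (Fin n) (Fin k) ℝ) :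
    Matrix.toLin' M = M.mulVecLin := by
  exact LinearMap.ext fun x => by
    rw [Matrix.toLin'_apply, Matrix.mulVecLin_apply]

lemma eval_detPoly (F : Matrix (Fin N) (Fin N) ℝ) :
    MvPolynomial.eval (fun p : Fin N × Fin N => F p.1 p.2) (Xmat N).det = F.det := by
  set φ : MvPolynomial (Fin N × Fin N) ℝ →+* ℝ :=
    (MvPolynomial.eval (fun p : Fin N × Fin N => F p.1 p.2))
  have h1 : φ (Xmat N).det = ((Xmat N).map φ).det := RingHom.map_det φ _
  rw [show MvPolynomial.eval (fun p : Fin N × Fin N => F p.1 p.2) (Xmat N).det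
      = φ (Xmat N).det from rfl, h1, Xmat_map_eval]

end GenProj

end GenProjAux

/-- The projection `π^F_J : ℝ^N → span{f_j : j ∈ J}` determined by the columns
`f_1, …, f_N` of `F`: it fixes `f_j` for `j ∈ J` and kills `f_j` for `j ∉ J`.
As a matrix it is `F * D_J * F⁻¹`, where `D_J` is the diagonal 0/1-matrix of `J`. -/
noncomputable def projMap (N : ℕ) (F : Matrix (Fin N) (Fin N) ℝ) (J : Finset (Fin N)) :
    (Fin N → ℝ) →ₗ[ℝ] (Fin N → ℝ) :=
  Matrix.toLin' (F * Matrix.diagonal (fun j => if j ∈ J then (1 : ℝ) else 0) * F⁻¹)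


/-- Given proper subspaces `C_1, …, C_m` of `ℝ^N`, there is a nonzero polynomial `G`
in the `N²` matrix entries such that `G(F) ≠ 0` implies `F` is invertible and
`dim π^F_J(C_i) = min(dim C_i, |J|)` for all `i` and all `J ⊆ [N]`. -/
theorem generic_projections_of_subspaces (N m : ℕ)
    (C : Fin m → Submodule ℝ (Fin N → ℝ)) (hC : ∀ i, C i ≠ ⊤) :
    ∃ G : MvPolynomial (Fin N × Fin N) ℝ, G ≠ 0 ∧
      ∀ F : Matrix (Fin N) (Fin N) ℝ,
        MvPolynomial.eval (fun p => F p.1 p.2) G ≠ 0 →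
          IsUnit F ∧
          ∀ (J : Finset (Fin N)) (i : Fin m),
            Module.finrank ℝ (Submodule.map (projMap N F J) (C i)) =
              min (Module.finrank ℝ (C i)) J.card := by
  classical
  set c : ∀ i : Fin m, Fin (Module.finrank ℝ (C i)) → (Fin N → ℝ) :=
    fun i k => ((Module.finBasis ℝ (C i)) k : Fin N → ℝ) with hcdef
  have hcindep : ∀ i, LinearIndependent ℝ (c i) := by
    intro i
    exact (Module.finBasis ℝ (C i)).linearIndependent.map'
      (C i).subtype (Submodule.ker_subtype _)
  have hcspan : ∀ i, span ℝ (Set.range (c i)) = C i := by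
    intro i
    have h1 : Set.range (c i)
        = (C i).subtype '' (Set.range (Module.finBasis ℝ (C i))) := by
      rw [← Set.range_comp]; rfl
    rw [h1, ← Submodule.map_span, Basis.span_eq, Submodule.map_subtype_top]
  refine ⟨(GenProj.Xmat N).det *
      ∏ i : Fin m, ∏ σ : Fin (Module.finrank ℝ (C i)) ↪ Fin N,
        GenProj.minorPoly (c i) σ, ?_, ?_⟩
  · apply mul_ne_zero
    · intro h0
      have h1 := congrArg
        (MvPolynomial.eval (fun p : Fin N × Fin N => (1 : Matrix (Fin N) (Fin N) ℝ) p.1 p.2)) h0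
      rw [map_zero, GenProj.eval_detPoly, Matrix.det_one] at h1
      exact one_ne_zero h1
    · rw [Finset.prod_ne_zero_iff]
      intro i _
      rw [Finset.prod_ne_zero_iff]
      intro σ _
      exact GenProj.minorPoly_ne_zero (c i) (hcindep i) σ
  · intro F hF
    rw [_root_.map_mul, map_prod] at hF
    have hdet : F.det ≠ 0 := by
      intro h0
      apply hF
      rw [GenProj.eval_detPoly, h0, zero_mul]
    have hprod : ∀ i : Fin m, ∀ σ : Fin (Module.finrank ℝ (C i)) ↪ Fin N,
        ((F.adjugate * GenProj.colMat (c i)).submatrix σ id).det ≠ 0 := by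
      intro i σ
      have h2 : (∏ i : Fin m, MvPolynomial.eval (fun p : Fin N × Fin N => F p.1 p.2)
          (∏ σ : Fin (Module.finrank ℝ (C i)) ↪ Fin N, GenProj.minorPoly (c i) σ)) ≠ 0 :=
        fun h => hF (by rw [h, mul_zero])
      rw [Finset.prod_ne_zero_iff] at h2
      have h3 := h2 i (Finset.mem_univ i)
      rw [map_prod, Finset.prod_ne_zero_iff] at h3
      have h4 := h3 σ (Finset.mem_univ σ)
      rwa [GenProj.eval_minorPoly] at h4
    have hadj : F.adjugate = F.det • F⁻¹ := by
      rw [Matrix.inv_def, smul_smul, Ring.inverse_eq_inv, mul_inv_cancel₀ hdet, one_smul]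
    refine ⟨(Matrix.isUnit_iff_isUnit_det F).mpr (Ne.isUnit hdet), ?_⟩
    intro J i
    set A : Matrix (Fin N) (Fin (Module.finrank ℝ (C i))) ℝ :=
      F⁻¹ * GenProj.colMat (c i) with hAdef
    have hd : Module.finrank ℝ (C i) ≤ N := by
      have := Submodule.finrank_le (C i)
      simpa [Module.finrank_fintype_fun_eq_card] using this
    have hAσ : ∀ σ : Fin (Module.finrank ℝ (C i)) ↪ Fin N,
        (A.submatrix σ id).det ≠ 0 := by
      intro σ
      have hm := hprod i σ
      rw [hadj, Matrix.smul_mul] at hm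
      have h5 : ((F.det • A).submatrix σ id) = F.det • (A.submatrix σ id) := rfl
      rw [hAdef] at h5
      rw [h5, Matrix.det_smul] at hm
      intro h0; rw [h0, mul_zero] at hm; exact hm rfl
    have hrank := GenProj.rank_diagonal_mul A hd hAσ J
    have hCrange : C i = LinearMap.range ((GenProj.colMat (c i)).mulVecLin) := by
      rw [Matrix.range_mulVecLin]
      have ht : Set.range (GenProj.colMat (c i))ᵀ = Set.range (c i) := by
        have : (GenProj.colMat (c i))ᵀ = c i := by
          funext j k; rfl
        rw [this]
      exact (hcspan i).symm
    set D : Matrix (Fin N) (Fin N) ℝ :=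
      Matrix.diagonal (fun j => if j ∈ J then (1:ℝ) else 0) with hDdef
    have hmap : LinearMap.range ((F * D * F⁻¹ * GenProj.colMat (c i)).mulVecLin)
        = Submodule.map (projMap N F J) (C i) := by
      rw [Matrix.mulVecLin_mul, LinearMap.range_comp, ← hCrange]
      have hP : (F * D * F⁻¹).mulVecLin = projMap N F J := by
        rw [projMap, hDdef, GenProj.toLin'_eq_mulVecLin]
      rw [hP]
    have hfr : Module.finrank ℝ (Submodule.map (projMap N F J) (C i))
        = (F * D * F⁻¹ * GenProj.colMat (c i)).rank := by
      rw [← hmap]; rfl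
    rw [hfr]
    have hassoc : F * D * F⁻¹ * GenProj.colMat (c i)
        = F * (D * (F⁻¹ * GenProj.colMat (c i))) := by
      rw [Matrix.mul_assoc, Matrix.mul_assoc]
    rw [hassoc, Matrix.rank_mul_eq_right_of_isUnit_det F _ (Ne.isUnit hdet)]
    exact hrank
end

section
/- Let V = ℝ^N, let 0 < r ≤ N, and let W be a linear subspace of ⋀^r V. For 1 ≤ m ≤ N-1 let t_m be the maximum of dim π^F_J(W) over all invertible N×N real matrices F and all subsets J of {1,…,N} of size m, where π^F_J also denotes the induced map ⋀^r V → ⋀^r V sending f_{k_1} ∧ … ∧ f_{k_r} to π^F_J(f_{k_1}) ∧ … ∧ π^F_J(f_{k_r}). Then there exists a nonzero real polynomial H in N² variables f_{ij} such that whenever H(F) ≠ 0, the matrix F is invertible and dim π^F_J(W) = t_m for every 1 ≤ m ≤ N-1 and every subset J of size m. -/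
/-- The image of a subspace `W` of the exterior algebra under the algebra map
induced by `π^F_J` (for `W ⊆ ⋀^r V`, this is the image under the induced map
`⋀^r V → ⋀^r V`). -/
noncomputable def projImage (N : ℕ) (F : Matrix (Fin N) (Fin N) ℝ) (J : Finset (Fin N))
    (W : Submodule ℝ (ExteriorAlgebra ℝ (Fin N → ℝ))) :
    Submodule ℝ (ExteriorAlgebra ℝ (Fin N → ℝ)) :=
  Submodule.map (ExteriorAlgebra.map (projMap N F J)).toLinearMap W

namespace GenericProjAux
open Matrix

open Module Submodule

noncomputable section

variable {N : ℕ}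

abbrev MP (N : ℕ) := MvPolynomial (Fin N × Fin N) ℝ

abbrev evalM (B : Matrix (Fin N) (Fin N) ℝ) : MP N →+* ℝ :=
  (MvPolynomial.eval (fun q => B q.1 q.2))

/-- A function of a matrix is a *polynomial map* into `E` if it can be written as a finite
sum of polynomials (in the matrix entries) times fixed vectors. -/
def PolyMap {E : Type*} [AddCommGroup E] [Module ℝ E] (N : ℕ)
    (f : Matrix (Fin N) (Fin N) ℝ → E) : Prop :=
  ∃ (k : ℕ) (p : Fin k → MP N) (u : Fin k → E),
    ∀ B, f B = ∑ j, evalM B (p j) • u j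

variable {E : Type*} [AddCommGroup E] [Module ℝ E]

theorem PolyMap.const (e : E) : PolyMap N (fun _ => e) :=
  ⟨1, fun _ => 1, fun _ => e, fun B => by simp⟩

theorem PolyMap.add {f g : Matrix (Fin N) (Fin N) ℝ → E} (hf : PolyMap N f)
    (hg : PolyMap N g) : PolyMap N (fun B => f B + g B) := by
  obtain ⟨k, p, u, hf⟩ := hf
  obtain ⟨l, q, v, hg⟩ := hg
  refine ⟨k + l, Fin.append p q, Fin.append u v, fun B => ?_⟩
  show f B + g B = _
  rw [hf, hg, Fin.sum_univ_add (f := fun j => evalM B (Fin.append p q j) • Fin.append u v j)]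
  simp [Fin.append_left, Fin.append_right]

theorem PolyMap.mul {A : Type*} [Ring A] [Algebra ℝ A] {f g : Matrix (Fin N) (Fin N) ℝ → A}
    (hf : PolyMap N f) (hg : PolyMap N g) : PolyMap N (fun B => f B * g B) := by
  obtain ⟨k, p, u, hf⟩ := hf
  obtain ⟨l, q, v, hg⟩ := hg
  refine ⟨k * l, fun j => p (finProdFinEquiv.symm j).1 * q (finProdFinEquiv.symm j).2,
    fun j => u (finProdFinEquiv.symm j).1 * v (finProdFinEquiv.symm j).2, fun B => ?_⟩
  show f B * g B = _
  rw [hf, hg, Finset.sum_mul_sum, ← Fintype.sum_prod_type']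
  exact Fintype.sum_equiv finProdFinEquiv _ _
    (fun x => by simp [smul_mul_smul_comm, _root_.map_mul, smul_smul, mul_comm])

theorem polyMap_extMap (w : ExteriorAlgebra ℝ (Fin N → ℝ)) :
    PolyMap N (fun B => ExteriorAlgebra.map (Matrix.toLin' B) w) := by
  induction w using ExteriorAlgebra.induction with
  | algebraMap r => simp only [AlgHom.commutes]; exact PolyMap.const _
  | ι v =>
    refine ⟨N, fun i => ∑ j, MvPolynomial.C (v j) * MvPolynomial.X (i, j),
      fun i => ExteriorAlgebra.ι ℝ (fun j => if i = j then (1 : ℝ) else 0), fun B => ?_⟩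
    simp only [ExteriorAlgebra.map_apply_ι, Matrix.toLin'_apply]
    rw [pi_eq_sum_univ (B.mulVec v), map_sum]
    refine Finset.sum_congr rfl fun i _ => ?_
    rw [_root_.map_smul]
    congr 1
    simp [Matrix.mulVec, dotProduct, mul_comm]
  | mul a b ha hb => simpa only [_root_.map_mul] using ha.mul hb
  | add a b ha hb => simpa only [map_add] using ha.add hb


section RankMatrix

variable {E : Type*} [AddCommGroup E] [Module ℝ E]

/-- Coordinates of a family of polynomial maps: the dimension of the span of the values is
the rank of a fixed polynomial matrix evaluated at the input. -/
theorem exists_rank_matrix {d : ℕ} (v : Fin d → Matrix (Fin N) (Fin N) ℝ → E)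
    (hv : ∀ i, PolyMap N (v i)) :
    ∃ (D : ℕ) (P : Matrix (Fin D) (Fin d) (MP N)),
      ∀ B, finrank ℝ (span ℝ (Set.range fun i => v i B)) = (P.map (evalM B)).rank := by
  choose k p u hu using hv
  have hs : (⋃ i, Set.range (u i)).Finite := Set.finite_iUnion (fun i => Set.finite_range _)
  set U : Submodule ℝ E := span ℝ (⋃ i, Set.range (u i)) with hU
  haveI : FiniteDimensional ℝ U := FiniteDimensional.span_of_finite _ hs
  set D := finrank ℝ U with hD
  let b : Basis (Fin D) ℝ U := Module.finBasis ℝ U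
  let uU : ∀ i, Fin (k i) → U := fun i j =>
    ⟨u i j, subset_span (Set.mem_iUnion.2 ⟨i, Set.mem_range_self _⟩)⟩
  refine ⟨D, Matrix.of fun a i => ∑ j, p i j * MvPolynomial.C (b.repr (uU i j) a),
    fun B => ?_⟩
  set M : Matrix (Fin D) (Fin d) ℝ :=
    (Matrix.of fun a i => ∑ j, p i j * MvPolynomial.C (b.repr (uU i j) a)).map (evalM B) with hM
  let vU : Fin d → U := fun i => ∑ j, evalM B (p i j) • uU i j
  have hvU : ∀ i, v i B = (vU i : E) := by
    intro i
    rw [hu i B]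
    simp [vU, uU]
  have hcol : ∀ i, Mᵀ i = b.equivFun (vU i) := by
    intro i
    funext a
    simp only [hM, Matrix.transpose_apply, Matrix.map_apply, vU, b.equivFun_apply, map_sum,
      _root_.map_smul, _root_.map_mul, MvPolynomial.eval_C]
    simp [Finsupp.smul_apply, smul_eq_mul, mul_comm]
  have h1 : (Set.range fun i => v i B) = U.subtype '' Set.range vU := by
    have : (fun i => v i B) = U.subtype ∘ vU := funext hvU
    rw [this, Set.range_comp]
  have h2 : Set.range Mᵀ = ⇑b.equivFun '' Set.range vU := by
    have : Mᵀ = ⇑b.equivFun ∘ vU := funext hcol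
    rw [this, Set.range_comp]
  rw [Matrix.rank_eq_finrank_span_cols, show M.col = Mᵀ from rfl, h2, h1, Submodule.span_image, Submodule.span_image_linearEquiv,
    Submodule.finrank_map_subtype_eq]
  exact (LinearEquiv.finrank_map_eq (b.equivFun) (span ℝ (Set.range vU))).symm

end RankMatrix

section Minor

/-- Extract a linearly independent subfamily of the right size. -/
theorem exists_indep_subfamily {V : Type*} [AddCommGroup V] [Module ℝ V]
    [FiniteDimensional ℝ V] {d t : ℕ} (v : Fin d → V)
    (h : finrank ℝ (span ℝ (Set.range v)) = t) :
    ∃ c : Fin t → Fin d, LinearIndependent ℝ (v ∘ c) := by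
  obtain ⟨s, hsub, hspan, hind⟩ := exists_linearIndependent ℝ (Set.range v)
  have hfin : s.Finite := hind.setFinite
  haveI := hfin.fintype
  have hcard : Fintype.card s = t := by
    have h1 : finrank ℝ (span ℝ (Set.range ((↑) : s → V))) = Fintype.card s :=
      finrank_span_eq_card hind
    rw [Subtype.range_coe, hspan, h] at h1
    exact h1.symm
  let e : Fin t ≃ s := (Fintype.equivFinOfCardEq hcard).symm
  choose c hc using fun j : Fin t => hsub (e j).2
  refine ⟨c, ?_⟩
  have hvc : v ∘ c = (↑) ∘ e := funext fun j => hc j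
  rw [hvc]
  exact hind.comp e e.injective

theorem rank_submatrix_le' {D d t : ℕ} (M : Matrix (Fin D) (Fin d) ℝ)
    (ri : Fin t → Fin D) (ci : Fin t → Fin d) :
    (M.submatrix ri ci).rank ≤ M.rank := by
  have hM : M.submatrix ri ci =
      ((1 : Matrix (Fin D) (Fin D) ℝ).submatrix ri id) * M *
        ((1 : Matrix (Fin d) (Fin d) ℝ).submatrix id ci) := by
    ext i j
    simp [Matrix.mul_apply, Matrix.one_apply, Finset.sum_ite_eq, Finset.sum_ite_eq']
  rw [hM]
  exact le_trans (Matrix.rank_mul_le_left _ _) (Matrix.rank_mul_le_right _ _)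

theorem exists_minor {D d t : ℕ} (M : Matrix (Fin D) (Fin d) ℝ) (ht : M.rank = t) :
    ∃ (ri : Fin t → Fin D) (ci : Fin t → Fin d), (M.submatrix ri ci).det ≠ 0 := by
  obtain ⟨ci, hci⟩ := exists_indep_subfamily (t := t) (fun i => Mᵀ i)
    (by rw [← ht, Matrix.rank_eq_finrank_span_cols]; rfl)
  set M₁ : Matrix (Fin D) (Fin t) ℝ := M.submatrix id ci with hM₁
  have h₁ : M₁.rank = t := by
    rw [Matrix.rank_eq_finrank_span_cols]
    have he : M₁ᵀ = (fun i => Mᵀ i) ∘ ci := by funext j a; rfl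
    rw [show M₁.col = M₁ᵀ from rfl, he, finrank_span_eq_card hci, Fintype.card_fin]
  have h₂ : M₁ᵀ.rank = t := by rw [Matrix.rank_transpose]; exact h₁
  obtain ⟨ri, hri⟩ := exists_indep_subfamily (t := t) (fun a => M₁ᵀᵀ a)
    (by have := Matrix.rank_eq_finrank_span_cols M₁ᵀ; rw [h₂] at this; exact this.symm)
  refine ⟨ri, ci, fun h0 => ?_⟩
  have hrows : LinearIndependent ℝ (fun j => (M.submatrix ri ci) j) := by
    have he : (fun j => (M.submatrix ri ci) j) = (fun a => M₁ᵀᵀ a) ∘ ri := by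
      funext j a; rfl
    rw [he]; exact hri
  exact ((Matrix.isUnit_iff_isUnit_det _).mp
    (Matrix.linearIndependent_rows_iff_isUnit.mp hrows)).ne_zero h0

end Minor


section Scaling

theorem extMap_smul_apply {V : Type*} [AddCommGroup V] [Module ℝ V] (c : ℝ) (φ : V →ₗ[ℝ] V)
    {n : ℕ} {x : ExteriorAlgebra ℝ V}
    (hx : x ∈ (LinearMap.range (ExteriorAlgebra.ι ℝ : V →ₗ[ℝ] ExteriorAlgebra ℝ V)) ^ n) :
    ExteriorAlgebra.map (c • φ) x = c ^ n • ExteriorAlgebra.map φ x := by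
  induction hx using Submodule.pow_induction_on_left' with
  | algebraMap r => simp
  | add x y i hx hy ihx ihy => rw [map_add, map_add, ihx, ihy, smul_add]
  | mem_mul m hm i x hx ih =>
      obtain ⟨v, rfl⟩ := hm
      rw [_root_.map_mul, _root_.map_mul, ExteriorAlgebra.map_apply_ι,
        ExteriorAlgebra.map_apply_ι, ih, LinearMap.smul_apply, _root_.map_smul,
        smul_mul_smul_comm, ← pow_succ']

theorem projImage_eq_adjugate {N : ℕ} (F : Matrix (Fin N) (Fin N) ℝ) (J : Finset (Fin N)) {r : ℕ}
    (W : Submodule ℝ (ExteriorAlgebra ℝ (Fin N → ℝ))) (hWle : W ≤ ⋀[ℝ]^r (Fin N → ℝ))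
    (hF : F.det ≠ 0) :
    Submodule.map (ExteriorAlgebra.map (Matrix.toLin'
        (F * Matrix.diagonal (fun j => if j ∈ J then (1:ℝ) else 0) * F.adjugate))).toLinearMap W
      = projImage N F J W := by
  set D := Matrix.diagonal (fun j => if j ∈ J then (1:ℝ) else 0) with hD
  have hmat : F * D * F.adjugate = F.det • (F * D * F⁻¹) := by
    rw [Matrix.inv_def, Ring.inverse_eq_inv, Matrix.mul_smul, smul_smul,
      mul_inv_cancel₀ hF, one_smul]
  have hsc : Matrix.toLin' (F * D * F.adjugate) = F.det • projMap N F J := by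
    rw [hmat, _root_.map_smul]; rfl
  have hkey : ∀ x ∈ W, (ExteriorAlgebra.map (Matrix.toLin' (F * D * F.adjugate))).toLinearMap x
      = F.det ^ r • (ExteriorAlgebra.map (projMap N F J)).toLinearMap x := by
    intro x hx
    simp only [AlgHom.toLinearMap_apply]
    rw [hsc]
    exact extMap_smul_apply _ _ (hWle hx)
  apply le_antisymm
  · rintro y ⟨x, hx, rfl⟩
    rw [hkey x hx]
    exact Submodule.smul_mem _ _ ⟨x, hx, rfl⟩
  · rintro y ⟨x, hx, rfl⟩
    have h2 : (ExteriorAlgebra.map (projMap N F J)).toLinearMap x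
        = (F.det ^ r)⁻¹ • (ExteriorAlgebra.map
            (Matrix.toLin' (F * D * F.adjugate))).toLinearMap x := by
      rw [hkey x hx, smul_smul, inv_mul_cancel₀ (pow_ne_zero _ hF), one_smul]
    rw [h2]
    exact Submodule.smul_mem _ _ ⟨x, hx, rfl⟩

end Scaling

section Perm

theorem exists_perm_projImage {N : ℕ} (W : Submodule ℝ (ExteriorAlgebra ℝ (Fin N → ℝ)))
    (F₀ : Matrix (Fin N) (Fin N) ℝ) (hF₀ : IsUnit F₀)
    (J J₀ : Finset (Fin N)) (hcard : J.card = J₀.card) :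
    ∃ F' : Matrix (Fin N) (Fin N) ℝ, IsUnit F' ∧ projImage N F' J W = projImage N F₀ J₀ W := by
  classical
  have hc1 : Fintype.card {x // x ∈ J} = Fintype.card {x // x ∈ J₀} := by
    simpa [Fintype.card_coe] using hcard
  have hc2 : Fintype.card {x // ¬ x ∈ J} = Fintype.card {x // ¬ x ∈ J₀} := by
    rw [Fintype.card_subtype_compl, Fintype.card_subtype_compl, hc1]
  let e1 : {x // x ∈ J} ≃ {x // x ∈ J₀} := Fintype.equivOfCardEq hc1
  let e2 : {x // ¬ x ∈ J} ≃ {x // ¬ x ∈ J₀} := Fintype.equivOfCardEq hc2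
  let σ : Equiv.Perm (Fin N) :=
    (Equiv.sumCompl (· ∈ J)).symm.trans ((e1.sumCongr e2).trans (Equiv.sumCompl (· ∈ J₀)))
  have hσ : ∀ i, σ i ∈ J₀ ↔ i ∈ J := by
    intro i
    by_cases h : i ∈ J
    · have : σ i = ↑(e1 ⟨i, h⟩) := by
        simp [σ, Equiv.sumCompl_symm_apply_of_pos h]
      rw [this]
      simpa [h] using (e1 ⟨i, h⟩).2
    · have : σ i = ↑(e2 ⟨i, h⟩) := by
        simp [σ, Equiv.sumCompl_symm_apply_of_neg h]
      rw [this]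
      simpa [h] using (e2 ⟨i, h⟩).2
  set P : Matrix (Fin N) (Fin N) ℝ := Matrix.of fun i j => if σ j = i then 1 else 0 with hP
  set dJ : Fin N → ℝ := fun j => if j ∈ J then 1 else 0 with hdJ
  set dJ₀ : Fin N → ℝ := fun j => if j ∈ J₀ then 1 else 0 with hdJ₀
  have hPD : P * Matrix.diagonal dJ = Matrix.diagonal dJ₀ * P := by
    ext i j
    rw [Matrix.mul_diagonal, Matrix.diagonal_mul]
    simp only [hP, Matrix.of_apply]
    by_cases h : σ j = i
    · rw [if_pos h, one_mul, mul_one, ← h, hdJ, hdJ₀]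
      simp [hσ j]
    · rw [if_neg h, zero_mul, mul_zero]
  have hPPt : P * Pᵀ = 1 := by
    ext i k
    simp only [Matrix.mul_apply, Matrix.transpose_apply, hP, Matrix.of_apply, Matrix.one_apply]
    rw [Finset.sum_eq_single (σ.symm i)]
    · simp only [Equiv.apply_symm_apply]
      by_cases h : i = k <;> simp [h]
    · intro j' _ hj'
      rw [if_neg, zero_mul]
      intro hc
      exact hj' (by rw [← hc]; simp)
    · intro h; exact absurd (Finset.mem_univ _) h
  have hPtP : Pᵀ * P = 1 := mul_eq_one_comm.mp hPPt
  have hPunit : IsUnit P := ⟨⟨P, Pᵀ, hPPt, hPtP⟩, rfl⟩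
  have hPinv : P⁻¹ = Pᵀ := Matrix.inv_eq_right_inv hPPt
  refine ⟨F₀ * P, hF₀.mul hPunit, ?_⟩
  have hproj : projMap N (F₀ * P) J = projMap N F₀ J₀ := by
    unfold projMap
    congr 1
    rw [Matrix.mul_inv_rev, hPinv]
    have h1 : P * Matrix.diagonal dJ * Pᵀ = Matrix.diagonal dJ₀ := by
      rw [hPD, Matrix.mul_assoc, hPPt, mul_one]
    calc F₀ * P * Matrix.diagonal dJ * (Pᵀ * F₀⁻¹)
        = F₀ * (P * Matrix.diagonal dJ * Pᵀ) * F₀⁻¹ := by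
          simp only [Matrix.mul_assoc]
      _ = F₀ * Matrix.diagonal dJ₀ * F₀⁻¹ := by rw [h1]
  unfold projImage
  rw [hproj]

end Perm


section GenericMatrix

/-- The generic `N × N` matrix with polynomial entries. -/
def genM (N : ℕ) : Matrix (Fin N) (Fin N) (MP N) :=
  Matrix.of fun i j => MvPolynomial.X (i, j)

theorem genM_map (F : Matrix (Fin N) (Fin N) ℝ) : (genM N).map (evalM F) = F := by
  ext i j
  simp [genM, Matrix.map_apply]

/-- The generic version of `F * D_J * adj F`. -/
def genB (N : ℕ) (J : Finset (Fin N)) : Matrix (Fin N) (Fin N) (MP N) :=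
  genM N * Matrix.diagonal (fun j => if j ∈ J then (1 : MP N) else 0) * (genM N).adjugate

theorem genB_map (F : Matrix (Fin N) (Fin N) ℝ) (J : Finset (Fin N)) :
    (genB N J).map (evalM F)
      = F * Matrix.diagonal (fun j => if j ∈ J then (1 : ℝ) else 0) * F.adjugate := by
  have h1 : ((genM N) * Matrix.diagonal (fun j => if j ∈ J then (1 : MP N) else 0)
        * (genM N).adjugate).map (evalM F)
      = (genM N).map (evalM F)
        * (Matrix.diagonal (fun j => if j ∈ J then (1 : MP N) else 0)).map (evalM F)
        * ((genM N).adjugate).map (evalM F) := by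
    rw [Matrix.map_mul, Matrix.map_mul]
  rw [genB, h1, genM_map]
  congr 1
  · congr 1
    rw [Matrix.diagonal_map (by simp)]
    congr 1
    funext j
    by_cases h : j ∈ J <;> simp [h]
  · have := (evalM F).map_adjugate (genM N)
    have h2 : (evalM F).mapMatrix (genM N).adjugate = ((genM N).adjugate).map (evalM F) := rfl
    have h3 : (evalM F).mapMatrix (genM N) = (genM N).map (evalM F) := rfl
    rw [h2, h3, genM_map] at this
    exact this

theorem evalM_det (F : Matrix (Fin N) (Fin N) ℝ) : evalM F (genM N).det = F.det := by
  rw [RingHom.map_det]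
  have h : (evalM F).mapMatrix (genM N) = (genM N).map (evalM F) := rfl
  rw [h, genM_map]

theorem detPoly_ne_zero (N : ℕ) : (genM N).det ≠ 0 := by
  intro h
  have h1 := evalM_det (N := N) 1
  rw [h, map_zero, Matrix.det_one] at h1
  exact one_ne_zero h1.symm

theorem evalM_comp_genB (F : Matrix (Fin N) (Fin N) ℝ) (J : Finset (Fin N)) (p : MP N) :
    evalM F (MvPolynomial.aeval (fun v : Fin N × Fin N => genB N J v.1 v.2) p)
      = evalM (F * Matrix.diagonal (fun j => if j ∈ J then (1 : ℝ) else 0) * F.adjugate) p := by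
  have hhom : (evalM F).comp
        ((MvPolynomial.aeval (fun v : Fin N × Fin N => genB N J v.1 v.2) :
          MP N →ₐ[ℝ] MP N) : MP N →+* MP N)
      = evalM (F * Matrix.diagonal (fun j => if j ∈ J then (1 : ℝ) else 0) * F.adjugate) := by
    apply MvPolynomial.ringHom_ext
    · intro rr
      simp
    · intro v
      simp only [RingHom.comp_apply, RingHom.coe_coe, MvPolynomial.aeval_X,
        MvPolynomial.eval_X]
      have h : ((genB N J).map (evalM F)) v.1 v.2
          = (F * Matrix.diagonal (fun j => if j ∈ J then (1 : ℝ) else 0) * F.adjugate) v.1 v.2 := by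
        rw [genB_map]
      simpa [Matrix.map_apply] using h
  simpa using RingHom.congr_fun hhom p

end GenericMatrix

end

end GenericProjAux


open GenericProjAux Module Submodule in
/-- For a subspace `W ⊆ ⋀^r ℝ^N`, there is a nonzero polynomial `H` in the `N²` matrix
entries such that `H(F) ≠ 0` implies `F` is invertible and, for each `1 ≤ m ≤ N - 1`
and each `J` of size `m`, `dim π^F_J(W)` equals the maximum `t_m` of `dim π^{F'}_{J'}(W)`
over all invertible `F'` and all `J'` of size `m`. -/
theorem generic_projections_of_exterior_subspace (N r : ℕ) (hr : 0 < r) (hrN : r ≤ N)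
    (W : Submodule ℝ (ExteriorAlgebra ℝ (Fin N → ℝ)))
    (hWle : W ≤ ⋀[ℝ]^r (Fin N → ℝ)) :
    ∃ H : MvPolynomial (Fin N × Fin N) ℝ, H ≠ 0 ∧
      ∀ F : Matrix (Fin N) (Fin N) ℝ,
        MvPolynomial.eval (fun p => F p.1 p.2) H ≠ 0 →
          IsUnit F ∧
          ∀ m : ℕ, 1 ≤ m → m ≤ N - 1 →
            ∀ J : Finset (Fin N), J.card = m →
              Module.finrank ℝ (projImage N F J W) =
                sSup {t : ℕ | ∃ (F' : Matrix (Fin N) (Fin N) ℝ) (J' : Finset (Fin N)),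
                  IsUnit F' ∧ J'.card = m ∧
                  t = Module.finrank ℝ (projImage N F' J' W)} := by
  classical
  -- finite dimensionality of `W`
  have hfg : (⋀[ℝ]^r (Fin N → ℝ)).FG := by
    have h1 : (LinearMap.range (ExteriorAlgebra.ι ℝ :
        (Fin N → ℝ) →ₗ[ℝ] ExteriorAlgebra ℝ (Fin N → ℝ))).FG := by
      rw [LinearMap.range_eq_map]
      exact Submodule.FG.map _ (Module.finite_def.mp inferInstance)
    exact h1.pow r
  haveI : Module.Finite ℝ (⋀[ℝ]^r (Fin N → ℝ)) := Module.Finite.iff_fg.mpr hfg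
  haveI hWfd : FiniteDimensional ℝ W := Submodule.finiteDimensional_of_le hWle
  -- spanning family of `W`
  set d := finrank ℝ W with hd
  haveI : Module.Free ℝ W := Module.Free.of_divisionRing ℝ W
  let bW : Basis (Fin d) ℝ W := Module.finBasis ℝ W
  let w : Fin d → ExteriorAlgebra ℝ (Fin N → ℝ) := fun i => (bW i : ExteriorAlgebra ℝ (Fin N → ℝ))
  have hWspan : span ℝ (Set.range w) = W := by
    have hw : w = W.subtype ∘ bW := rfl
    rw [hw, Set.range_comp, Submodule.span_image, bW.span_eq, Submodule.map_subtype_top]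
  obtain ⟨D, P, hP⟩ := exists_rank_matrix
    (fun i (B : Matrix (Fin N) (Fin N) ℝ) => ExteriorAlgebra.map (Matrix.toLin' B) (w i))
    (fun i => polyMap_extMap (w i))
  have key : ∀ B : Matrix (Fin N) (Fin N) ℝ,
      Submodule.map (ExteriorAlgebra.map (Matrix.toLin' B)).toLinearMap W
        = span ℝ (Set.range fun i => ExteriorAlgebra.map (Matrix.toLin' B) (w i)) := by
    intro B
    conv_lhs => rw [← hWspan]
    rw [Submodule.map_span, ← Set.range_comp]
    rfl
  have keyrank : ∀ F : Matrix (Fin N) (Fin N) ℝ, F.det ≠ 0 → ∀ J : Finset (Fin N),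
      finrank ℝ (projImage N F J W) = (P.map (evalM (F * Matrix.diagonal
        (fun j => if j ∈ J then (1:ℝ) else 0) * F.adjugate))).rank := by
    intro F hF J
    rw [← projImage_eq_adjugate F J W hWle hF, key, hP]
  have hSbdd : ∀ m : ℕ, BddAbove {t : ℕ | ∃ (F' : Matrix (Fin N) (Fin N) ℝ)
      (J' : Finset (Fin N)), IsUnit F' ∧ J'.card = m ∧
      t = finrank ℝ (projImage N F' J' W)} := by
    intro m
    refine ⟨finrank ℝ W, ?_⟩
    rintro t ⟨F', J', hF', hc', rfl⟩
    exact Submodule.finrank_map_le _ _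
  have hSne : ∀ m : ℕ, m ≤ N - 1 → {t : ℕ | ∃ (F' : Matrix (Fin N) (Fin N) ℝ)
      (J' : Finset (Fin N)), IsUnit F' ∧ J'.card = m ∧
      t = finrank ℝ (projImage N F' J' W)}.Nonempty := by
    intro m hm
    obtain ⟨J', _, hJ'⟩ := Finset.exists_subset_card_eq (s := (Finset.univ : Finset (Fin N))) (n := m)
      (by rw [Finset.card_univ, Fintype.card_fin]; omega)
    exact ⟨_, 1, J', isUnit_one, hJ', rfl⟩
  -- the polynomial for each `J`
  have hq : ∀ J : Finset (Fin N), ∃ q : MP N, q ≠ 0 ∧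
      (1 ≤ J.card → J.card ≤ N - 1 → ∀ F : Matrix (Fin N) (Fin N) ℝ, F.det ≠ 0 →
        evalM F q ≠ 0 → finrank ℝ (projImage N F J W) =
          sSup {t : ℕ | ∃ (F' : Matrix (Fin N) (Fin N) ℝ) (J' : Finset (Fin N)),
            IsUnit F' ∧ J'.card = J.card ∧
            t = finrank ℝ (projImage N F' J' W)}) := by
    intro J
    by_cases hJcond : 1 ≤ J.card ∧ J.card ≤ N - 1
    case neg => exact ⟨1, one_ne_zero, fun h1 h2 => absurd ⟨h1, h2⟩ hJcond⟩
    obtain ⟨hJ1, hJ2⟩ := hJcond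
    set t := sSup {t : ℕ | ∃ (F' : Matrix (Fin N) (Fin N) ℝ) (J' : Finset (Fin N)),
      IsUnit F' ∧ J'.card = J.card ∧ t = finrank ℝ (projImage N F' J' W)} with ht
    have htmem := Nat.sSup_mem (hSne J.card hJ2) (hSbdd J.card)
    rw [← ht] at htmem
    obtain ⟨F₀, J₀, hF₀, hJ₀, htval⟩ := htmem
    obtain ⟨F', hF', hFproj⟩ := exists_perm_projImage W F₀ hF₀ J J₀ hJ₀.symm
    have hF'det : F'.det ≠ 0 := ((Matrix.isUnit_iff_isUnit_det F').mp hF').ne_zero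
    have hrank : (P.map (evalM (F' * Matrix.diagonal
        (fun j => if j ∈ J then (1:ℝ) else 0) * F'.adjugate))).rank = t := by
      rw [← keyrank F' hF'det J, hFproj, ← htval]
    obtain ⟨ri, ci, hdet⟩ := exists_minor _ hrank
    set q : MP N := ((P.submatrix ri ci).map
      (MvPolynomial.aeval (fun v : Fin N × Fin N => genB N J v.1 v.2))).det with hqdef
    have hqeval : ∀ F : Matrix (Fin N) (Fin N) ℝ,
        evalM F q = ((P.map (evalM (F * Matrix.diagonal
          (fun j => if j ∈ J then (1:ℝ) else 0) * F.adjugate))).submatrix ri ci).det := by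
      intro F
      rw [hqdef, RingHom.map_det]
      congr 1
      ext i j
      simp only [RingHom.mapMatrix_apply, Matrix.map_apply, Matrix.submatrix_apply]
      exact evalM_comp_genB F J _
    refine ⟨q, ?_, fun _ _ F hFdet hqF => ?_⟩
    · intro h0
      apply hdet
      have h1 := hqeval F'
      rw [h0, map_zero] at h1
      exact h1.symm
    · have h1 := keyrank F hFdet J
      have hle : finrank ℝ (projImage N F J W) ≤ t :=
        le_csSup (hSbdd J.card) ⟨F, J, (Matrix.isUnit_iff_isUnit_det F).mpr
          (isUnit_iff_ne_zero.mpr hFdet), rfl, rfl⟩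
      have hdetF : ((P.map (evalM (F * Matrix.diagonal (fun j => if j ∈ J then (1:ℝ) else 0)
          * F.adjugate))).submatrix ri ci).det ≠ 0 := by rw [← hqeval F]; exact hqF
      have hunit := (Matrix.isUnit_iff_isUnit_det _).mpr (isUnit_iff_ne_zero.mpr hdetF)
      have hrk := Matrix.rank_of_isUnit _ hunit
      have hge : t ≤ (P.map (evalM (F * Matrix.diagonal (fun j => if j ∈ J then (1:ℝ) else 0)
          * F.adjugate))).rank := by
        calc t = ((P.map (evalM (F * Matrix.diagonal (fun j => if j ∈ J then (1:ℝ) else 0)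
              * F.adjugate))).submatrix ri ci).rank := by rw [hrk, Fintype.card_fin]
          _ ≤ _ := rank_submatrix_le' _ _ _
      omega
  choose q hq0 hqP using hq
  refine ⟨(genM N).det * ∏ J : Finset (Fin N), q J, ?_, ?_⟩
  · exact mul_ne_zero (detPoly_ne_zero N) (Finset.prod_ne_zero_iff.mpr fun J _ => hq0 J)
  · intro F hF
    have hF' : evalM F ((genM N).det * ∏ J : Finset (Fin N), q J) ≠ 0 := hF
    rw [map_mul] at hF'
    have h2 := mul_ne_zero_iff.mp hF'
    have hdet : F.det ≠ 0 := by rw [← evalM_det F]; exact h2.1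
    have h3 := h2.2
    rw [map_prod] at h3
    have hfac : ∀ J : Finset (Fin N), evalM F (q J) ≠ 0 :=
      fun J => Finset.prod_ne_zero_iff.mp h3 J (Finset.mem_univ J)
    refine ⟨(Matrix.isUnit_iff_isUnit_det F).mpr (isUnit_iff_ne_zero.mpr hdet), ?_⟩
    intro m hm1 hm2 J hJ
    subst hJ
    exact hqP J hm1 hm2 F hdet (hfac J)
end

section
/- Fix non-negative integers a, b, n with a ≤ b ≤ n. Let 𝒜 be a family of a-element subsets of {1,…,n}. Then there exists a b-element subset B of {1,…,n} such that |{A ∈ 𝒜 : A ⊆ B}| / C(b, a) ≥ |𝒜| / C(n, a). -/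
open Finset

lemma choose_mul_choose_eq_aux {a b n : ℕ} (hab : a ≤ b) (hbn : b ≤ n) :
    n.choose b * b.choose a = n.choose a * (n - a).choose (b - a) := by
  have h1 : 0 < a.factorial * ((b - a).factorial * (n - b).factorial) := by positivity
  apply Nat.eq_of_mul_eq_mul_right h1
  have e1 : b.choose a * a.factorial * (b - a).factorial = b.factorial :=
    Nat.choose_mul_factorial_mul_factorial hab
  have e2 : n.choose b * b.factorial * (n - b).factorial = n.factorial :=
    Nat.choose_mul_factorial_mul_factorial hbn
  have e3 : n.choose a * a.factorial * (n - a).factorial = n.factorial :=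
    Nat.choose_mul_factorial_mul_factorial (hab.trans hbn)
  have hba : b - a ≤ n - a := Nat.sub_le_sub_right hbn a
  have e4 : (n - a).choose (b - a) * (b - a).factorial * ((n - a) - (b - a)).factorial
      = (n - a).factorial := Nat.choose_mul_factorial_mul_factorial hba
  have e5 : (n - a) - (b - a) = n - b := by omega
  rw [e5] at e4
  calc n.choose b * b.choose a * (a.factorial * ((b - a).factorial * (n - b).factorial))
      = n.choose b * (b.choose a * a.factorial * (b - a).factorial) * (n - b).factorial := by ring
    _ = n.choose b * b.factorial * (n - b).factorial := by rw [e1]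
    _ = n.factorial := e2
    _ = n.choose a * a.factorial * (n - a).factorial := e3.symm
    _ = n.choose a * a.factorial *
        ((n - a).choose (b - a) * (b - a).factorial * (n - b).factorial) := by rw [e4]
    _ = n.choose a * (n - a).choose (b - a) *
        (a.factorial * ((b - a).factorial * (n - b).factorial)) := by ring

lemma count_supersets {n a b : ℕ} (hab : a ≤ b) (A : Finset (Fin n)) (hA : A.card = a) :
    ((Finset.powersetCard b (univ : Finset (Fin n))).filter (fun B => A ⊆ B)).card
      = (n - a).choose (b - a) := by
  have hAc : Aᶜ.card = n - a := by
    rw [card_compl, hA, Fintype.card_fin]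
  rw [← hAc, ← Finset.card_powersetCard]
  apply Finset.card_nbij' (fun B => B \ A) (fun C => C ∪ A)
  · intro B hB
    simp only [mem_coe, mem_filter, mem_powersetCard] at hB
    obtain ⟨⟨_, hcard⟩, hsub⟩ := hB
    simp only [mem_coe, mem_powersetCard]
    constructor
    · intro x hx
      simp only [mem_sdiff] at hx
      simp [hx.2]
    · rw [card_sdiff_of_subset hsub, hcard, hA]
  · intro C hC
    simp only [mem_coe, mem_powersetCard] at hC
    obtain ⟨hsub, hcard⟩ := hC
    simp only [mem_coe, mem_filter, mem_powersetCard]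
    refine ⟨⟨subset_univ _, ?_⟩, subset_union_right⟩
    rw [card_union_of_disjoint, hcard, hA]
    · omega
    · exact disjoint_compl_left.mono_left hsub
  · intro B hB
    simp only [mem_coe, mem_filter, mem_powersetCard] at hB
    exact sdiff_union_of_subset hB.2
  · intro C hC
    simp only [mem_coe, mem_powersetCard] at hC
    exact union_sdiff_cancel_right (disjoint_compl_left.mono_left hC.1)

/-- Any `a`-uniform hypergraph on `[n]` has a restriction to some `b`-element set
whose density is at least the density of the original hypergraph. -/
theorem exists_dense_restriction (n a b : ℕ) (hab : a ≤ b) (hbn : b ≤ n)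
    (𝒜 : Finset (Finset (Fin n))) (h𝒜 : ∀ A ∈ 𝒜, A.card = a) :
    ∃ B : Finset (Fin n), B.card = b ∧
      (((𝒜.filter (fun A => A ⊆ B)).card : ℝ) / (b.choose a) ≥
        (𝒜.card : ℝ) / (n.choose a)) := by
  set S : Finset (Finset (Fin n)) := Finset.powersetCard b (univ : Finset (Fin n)) with hS
  have hScard : S.card = n.choose b := by
    rw [hS, Finset.card_powersetCard, card_univ, Fintype.card_fin]
  have hSne : S.Nonempty := by
    rw [← Finset.card_pos, hScard]
    exact Nat.choose_pos hbn
  -- total count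
  have hsum : ∑ B ∈ S, (𝒜.filter (fun A => A ⊆ B)).card
      = 𝒜.card * (n - a).choose (b - a) := by
    have : ∀ B ∈ S, (𝒜.filter (fun A => A ⊆ B)).card
        = ∑ A ∈ 𝒜, if A ⊆ B then 1 else 0 := by
      intro B _
      rw [Finset.card_filter]
    rw [Finset.sum_congr rfl this, Finset.sum_comm]
    have h2 : ∀ A ∈ 𝒜, (∑ B ∈ S, if A ⊆ B then 1 else 0) = (n - a).choose (b - a) := by
      intro A hA
      rw [← Finset.card_filter]
      exact count_supersets hab A (h𝒜 A hA)
    rw [Finset.sum_congr rfl h2, Finset.sum_const, smul_eq_mul]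
  -- pigeonhole
  obtain ⟨B, hB, hBle⟩ := Finset.exists_le_of_sum_le (f := fun _ => 𝒜.card * (n - a).choose (b - a))
    (g := fun B => n.choose b * (𝒜.filter (fun A => A ⊆ B)).card) hSne (by
      rw [Finset.sum_const, smul_eq_mul, ← Finset.mul_sum, hsum, hScard])
  have hBmem := Finset.mem_powersetCard.1 hB
  refine ⟨B, hBmem.2, ?_⟩
  have hca : 0 < (n.choose a : ℝ) := by exact_mod_cast Nat.choose_pos (hab.trans hbn)
  have hcb : 0 < (b.choose a : ℝ) := by exact_mod_cast Nat.choose_pos hab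
  rw [ge_iff_le, div_le_div_iff₀ hca hcb]
  -- need: 𝒜.card * b.choose a ≤ F * n.choose a
  have key : 𝒜.card * b.choose a * n.choose b
      ≤ (𝒜.filter (fun A => A ⊆ B)).card * n.choose a * n.choose b := by
    calc 𝒜.card * b.choose a * n.choose b
        = n.choose a * (𝒜.card * (n - a).choose (b - a)) := by
          rw [show 𝒜.card * b.choose a * n.choose b = 𝒜.card * (n.choose b * b.choose a) by ring,
            choose_mul_choose_eq_aux hab hbn]; ring
      _ ≤ n.choose a * (n.choose b * (𝒜.filter (fun A => A ⊆ B)).card) :=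
          Nat.mul_le_mul_left _ hBle
      _ = (𝒜.filter (fun A => A ⊆ B)).card * n.choose a * n.choose b := by ring
  have hnb : 0 < n.choose b := Nat.choose_pos hbn
  have key2 : 𝒜.card * b.choose a ≤ (𝒜.filter (fun A => A ⊆ B)).card * n.choose a :=
    Nat.le_of_mul_le_mul_right key hnb
  exact_mod_cast key2
end

section
/- Let (A_1, B_1), …, (A_m, B_m) be pairs of finite sets with |A_i| = a and |B_i| = b for every i. Suppose: (i) A_i ∩ B_i = ∅ for 1 ≤ i ≤ m; and (ii) A_i ∩ B_j ≠ ∅ for all i ≠ j. Then m ≤ C(a+b, a). -/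
open Equiv Finset

namespace Bollobas

variable {α : Type*} [Fintype α] [LinearOrder α]

def sepPerm (a b : ℕ) (R : Finset (Fin (a + b))) (hR : R.card = a) (hRc : Rᶜ.card = b) :
    Equiv.Perm (Fin (a + b)) :=
  (Equiv.sumCompl (· ∈ R)).symm.trans
    ((Equiv.sumCongr (R.orderIsoOfFin hR).toEquiv.symm
        ((Equiv.subtypeEquivRight fun x => (Finset.mem_compl (a := x)).symm).trans
          (Rᶜ.orderIsoOfFin hRc).toEquiv.symm)).trans finSumFinEquiv)

lemma sepPerm_lt_iff (a b : ℕ) (R : Finset (Fin (a + b))) (hR : R.card = a)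
    (hRc : Rᶜ.card = b) (k : Fin (a + b)) :
    ((sepPerm a b R hR hRc) k).val < a ↔ k ∈ R := by
  by_cases hk : k ∈ R
  · simp only [sepPerm, Equiv.trans_apply, Equiv.sumCompl_symm_apply_of_pos hk,
      Equiv.sumCongr_apply, Sum.map_inl, finSumFinEquiv_apply_left]
    exact iff_of_true (by simp) hk
  · simp only [sepPerm, Equiv.trans_apply, Equiv.sumCompl_symm_apply_of_neg hk,
      Equiv.sumCongr_apply, Sum.map_inr, finSumFinEquiv_apply_right]
    exact iff_of_false (by simp) hk

/-- The permutation of `α` which is the identity outside `V` and rearranges `V` so that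
the elements of `V` whose rank belongs to `R` come first (in order). -/
def resort (a b : ℕ) (V : Finset α) (hV : V.card = a + b) (R : Finset (Fin (a + b)))
    (hR : R.card = a) (hRc : Rᶜ.card = b) : Equiv.Perm α :=
  (sepPerm a b R hR hRc).extendDomain (V.orderIsoOfFin hV).toEquiv

lemma resort_congr {a b : ℕ} {V₁ V₂ : Finset α} {R₁ R₂ : Finset (Fin (a + b))}
    (hV₁ : V₁.card = a + b) (hV₂ : V₂.card = a + b) (hR₁ : R₁.card = a) (hR₂ : R₂.card = a)
    (hRc₁ : R₁ᶜ.card = b) (hRc₂ : R₂ᶜ.card = b) (eV : V₁ = V₂) (eR : R₁ = R₂) :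
    resort a b V₁ hV₁ R₁ hR₁ hRc₁ = resort a b V₂ hV₂ R₂ hR₂ hRc₂ := by
  subst eV; subst eR; rfl

lemma resort_apply_mem {a b : ℕ} {V : Finset α} (hV : V.card = a + b)
    {R : Finset (Fin (a + b))} (hR : R.card = a) (hRc : Rᶜ.card = b) {x : α} (hx : x ∈ V) :
    resort a b V hV R hR hRc x =
      ((V.orderIsoOfFin hV) ((sepPerm a b R hR hRc)
        ((V.orderIsoOfFin hV).toEquiv.symm ⟨x, hx⟩)) : α) := by
  exact Equiv.Perm.extendDomain_apply_subtype _ _ hx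

lemma resort_apply_mem' {a b : ℕ} {V : Finset α} (hV : V.card = a + b)
    {R : Finset (Fin (a + b))} (hR : R.card = a) (hRc : Rᶜ.card = b) {x : α} (hx : x ∈ V) :
    resort a b V hV R hR hRc x ∈ V := by
  rw [resort_apply_mem hV hR hRc hx]
  exact ((V.orderIsoOfFin hV) _).2


set_option maxHeartbeats 1000000 in
lemma key (a b : ℕ) (P Q : Finset α) (hP : P.card = a) (hQ : Q.card = b)
    (hPQ : Disjoint P Q) :
    Fintype.card (Equiv.Perm α) ≤
      (a + b).choose a *
        (univ.filter (fun σ : Equiv.Perm α => ∀ p ∈ P, ∀ q ∈ Q, σ p < σ q)).card := by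
  classical
  have hU : (P ∪ Q).card = a + b := by
    rw [card_union_of_disjoint hPQ, hP, hQ]
  set U := P ∪ Q with hUdef
  have hVc : ∀ τ : Equiv.Perm α, (U.image τ).card = a + b := fun τ => by
    rw [card_image_of_injective _ τ.injective, hU]
  let Rk : Equiv.Perm α → Finset (Fin (a + b)) := fun τ =>
    univ.filter fun k => (((U.image τ).orderIsoOfFin (hVc τ)) k : α) ∈ P.image τ
  have hWsub : ∀ τ : Equiv.Perm α, P.image τ ⊆ U.image τ := fun τ =>
    image_subset_image subset_union_left
  have hRk : ∀ τ, (Rk τ).card = a := by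
    intro τ
    have e : (Rk τ).card = (P.image τ).card := by
      apply card_bij (fun k _ => (((U.image τ).orderIsoOfFin (hVc τ)) k : α))
      · intro k hk; exact (mem_filter.mp hk).2
      · intro k₁ h₁ k₂ h₂ h
        exact ((U.image τ).orderIsoOfFin (hVc τ)).injective (Subtype.ext h)
      · intro w hw
        have hwV : w ∈ U.image τ := hWsub τ hw
        refine ⟨((U.image τ).orderIsoOfFin (hVc τ)).symm ⟨w, hwV⟩, ?_, ?_⟩
        · simp only [Rk, mem_filter, mem_univ, true_and, OrderIso.apply_symm_apply]
          exact hw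
        · simp
    rw [e, card_image_of_injective _ τ.injective, hP]
  have hRkc : ∀ τ, (Rk τ)ᶜ.card = b := by
    intro τ
    rw [card_compl, hRk]
    simp
  let Φ : Equiv.Perm α → Equiv.Perm α := fun τ =>
    τ.trans (resort a b (U.image τ) (hVc τ) (Rk τ) (hRk τ) (hRkc τ))
  have hΦmem : ∀ τ, Φ τ ∈ univ.filter (fun σ : Equiv.Perm α => ∀ p ∈ P, ∀ q ∈ Q, σ p < σ q) := by
    intro τ
    rw [mem_filter]
    refine ⟨mem_univ _, fun p hp q hq => ?_⟩
    have hpU : τ p ∈ U.image τ := mem_image_of_mem τ (mem_union_left _ hp)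
    have hqU : τ q ∈ U.image τ := mem_image_of_mem τ (mem_union_right _ hq)
    have e1 : Φ τ p = resort a b (U.image τ) (hVc τ) (Rk τ) (hRk τ) (hRkc τ) (τ p) := rfl
    have e2 : Φ τ q = resort a b (U.image τ) (hVc τ) (Rk τ) (hRk τ) (hRkc τ) (τ q) := rfl
    rw [e1, e2, resort_apply_mem _ _ _ hpU, resort_apply_mem _ _ _ hqU]
    set oV := (U.image τ).orderIsoOfFin (hVc τ)
    set kp := oV.toEquiv.symm ⟨τ p, hpU⟩
    set kq := oV.toEquiv.symm ⟨τ q, hqU⟩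
    have hkp : kp ∈ Rk τ := by
      simp only [Rk, mem_filter, mem_univ, true_and]
      show ((oV kp : α) ∈ P.image τ)
      have : oV kp = ⟨τ p, hpU⟩ := oV.toEquiv.apply_symm_apply _
      rw [this]
      exact mem_image_of_mem τ hp
    have hkq : kq ∉ Rk τ := by
      simp only [Rk, mem_filter, mem_univ, true_and]
      have : oV kq = ⟨τ q, hqU⟩ := oV.toEquiv.apply_symm_apply _
      rw [this]
      intro hmem
      obtain ⟨p', hp', hpq⟩ := mem_image.mp hmem
      have : p' = q := τ.injective hpq
      subst this
      exact (disjoint_left.mp hPQ hp') hq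
    have h1 : ((sepPerm a b (Rk τ) (hRk τ) (hRkc τ)) kp).val < a :=
      (sepPerm_lt_iff a b (Rk τ) (hRk τ) (hRkc τ) kp).mpr hkp
    have h2 : a ≤ ((sepPerm a b (Rk τ) (hRk τ) (hRkc τ)) kq).val :=
      Nat.le_of_not_lt (fun h => hkq ((sepPerm_lt_iff a b (Rk τ) (hRk τ) (hRkc τ) kq).mp h))
    have : (sepPerm a b (Rk τ) (hRk τ) (hRkc τ)) kp < (sepPerm a b (Rk τ) (hRk τ) (hRkc τ)) kq :=
      Fin.lt_def.mpr (lt_of_lt_of_le h1 h2)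
    exact Subtype.coe_lt_coe.mpr (oV.lt_iff_lt.mpr this)
  have hΦV : ∀ τ : Equiv.Perm α, U.image (Φ τ) = U.image τ := by
    intro τ
    apply eq_of_subset_of_card_le
    · intro x hx
      obtain ⟨u, hu, rfl⟩ := mem_image.mp hx
      exact resort_apply_mem' (hVc τ) (hRk τ) (hRkc τ) (mem_image_of_mem τ hu)
    · rw [hVc τ, card_image_of_injective _ (Φ τ).injective, hU]
  have hmaps : ∀ τ : Equiv.Perm α, τ ∈ (univ : Finset (Equiv.Perm α)) →
      (Φ τ, Rk τ) ∈ (univ.filter (fun σ : Equiv.Perm α => ∀ p ∈ P, ∀ q ∈ Q, σ p < σ q)) ×ˢ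
        powersetCard a (univ : Finset (Fin (a + b))) := by
    intro τ _
    rw [mem_product]
    exact ⟨hΦmem τ, mem_powersetCard.mpr ⟨subset_univ _, hRk τ⟩⟩
  have hinj : Set.InjOn (fun τ => (Φ τ, Rk τ)) ((univ : Finset (Equiv.Perm α)) : Set (Equiv.Perm α)) := by
    intro τ₁ _ τ₂ _ h
    have hΦ : Φ τ₁ = Φ τ₂ := congrArg Prod.fst h
    have hR : Rk τ₁ = Rk τ₂ := congrArg Prod.snd h
    have eV : U.image τ₁ = U.image τ₂ := by rw [← hΦV τ₁, ← hΦV τ₂, hΦ]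
    have eρ : resort a b (U.image τ₁) (hVc τ₁) (Rk τ₁) (hRk τ₁) (hRkc τ₁) =
        resort a b (U.image τ₂) (hVc τ₂) (Rk τ₂) (hRk τ₂) (hRkc τ₂) :=
      resort_congr _ _ _ _ _ _ eV hR
    ext x
    have hx : Φ τ₁ x = Φ τ₂ x := by rw [hΦ]
    have hx1 : Φ τ₁ x = resort a b (U.image τ₁) (hVc τ₁) (Rk τ₁) (hRk τ₁) (hRkc τ₁) (τ₁ x) := rfl
    have hx2 : Φ τ₂ x = resort a b (U.image τ₂) (hVc τ₂) (Rk τ₂) (hRk τ₂) (hRkc τ₂) (τ₂ x) := rfl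
    rw [hx1, hx2, ← eρ] at hx
    exact (resort a b (U.image τ₁) (hVc τ₁) (Rk τ₁) (hRk τ₁) (hRkc τ₁)).injective hx
  calc Fintype.card (Equiv.Perm α) = (univ : Finset (Equiv.Perm α)).card := card_univ.symm
    _ ≤ ((univ.filter (fun σ : Equiv.Perm α => ∀ p ∈ P, ∀ q ∈ Q, σ p < σ q)) ×ˢ
        powersetCard a (univ : Finset (Fin (a + b)))).card :=
      card_le_card_of_injOn _ hmaps hinj
    _ = (a + b).choose a *
        (univ.filter (fun σ : Equiv.Perm α => ∀ p ∈ P, ∀ q ∈ Q, σ p < σ q)).card := by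
      rw [card_product, card_powersetCard, card_univ, Fintype.card_fin, Nat.mul_comm]

end Bollobas

/-- The uniform Bollobás Two Families Theorem. -/
theorem uniform_two_families (m a b : ℕ) (A B : Fin m → Finset ℕ)
    (hA : ∀ i, (A i).card = a) (hB : ∀ i, (B i).card = b)
    (hdisj : ∀ i, A i ∩ B i = ∅)
    (hcross : ∀ i j, i ≠ j → A i ∩ B j ≠ ∅) :
    m ≤ (a + b).choose a := by
  classical
  set S : Finset ℕ := Finset.univ.biUnion (fun i => A i ∪ B i) with hS
  have hAS : ∀ i, ∀ x ∈ A i, x ∈ S := fun i x hx =>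
    Finset.mem_biUnion.mpr ⟨i, Finset.mem_univ i, Finset.mem_union_left _ hx⟩
  have hBS : ∀ i, ∀ x ∈ B i, x ∈ S := fun i x hx =>
    Finset.mem_biUnion.mpr ⟨i, Finset.mem_univ i, Finset.mem_union_right _ hx⟩
  let α := {x : ℕ // x ∈ S}
  let P : Fin m → Finset α := fun i => (A i).subtype (· ∈ S)
  let Q : Fin m → Finset α := fun i => (B i).subtype (· ∈ S)
  have hPc : ∀ i, (P i).card = a := by
    intro i
    rw [Finset.card_subtype, Finset.filter_true_of_mem (hAS i), hA i]
  have hQc : ∀ i, (Q i).card = b := by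
    intro i
    rw [Finset.card_subtype, Finset.filter_true_of_mem (hBS i), hB i]
  have hPQ : ∀ i, Disjoint (P i) (Q i) := by
    intro i
    rw [Finset.disjoint_left]
    intro x hx1 hx2
    rw [Finset.mem_subtype] at hx1 hx2
    have : (x : ℕ) ∈ A i ∩ B i := Finset.mem_inter.mpr ⟨hx1, hx2⟩
    rw [hdisj i] at this
    exact absurd this (Finset.notMem_empty _)
  let E : Fin m → Finset (Equiv.Perm α) := fun i =>
    Finset.univ.filter (fun σ : Equiv.Perm α => ∀ p ∈ P i, ∀ q ∈ Q i, σ p < σ q)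
  have hkey : ∀ i, Fintype.card (Equiv.Perm α) ≤ (a + b).choose a * (E i).card := fun i =>
    Bollobas.key a b (P i) (Q i) (hPc i) (hQc i) (hPQ i)
  have hdisjE : ∀ i ∈ (Finset.univ : Finset (Fin m)), ∀ j ∈ (Finset.univ : Finset (Fin m)),
      i ≠ j → Disjoint (E i) (E j) := by
    intro i _ j _ hij
    rw [Finset.disjoint_left]
    intro σ hσi hσj
    obtain ⟨x, hx⟩ := Finset.nonempty_iff_ne_empty.mpr (hcross i j hij)
    obtain ⟨y, hy⟩ := Finset.nonempty_iff_ne_empty.mpr (hcross j i hij.symm)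
    rw [Finset.mem_inter] at hx hy
    have hxS : x ∈ S := hAS i x hx.1
    have hyS : y ∈ S := hAS j y hy.1
    have h1 : σ ⟨x, hxS⟩ < σ ⟨y, hyS⟩ := by
      have := (Finset.mem_filter.mp hσi).2
      exact this ⟨x, hxS⟩ (Finset.mem_subtype.mpr hx.1) ⟨y, hyS⟩ (Finset.mem_subtype.mpr hy.2)
    have h2 : σ ⟨y, hyS⟩ < σ ⟨x, hxS⟩ := by
      have := (Finset.mem_filter.mp hσj).2
      exact this ⟨y, hyS⟩ (Finset.mem_subtype.mpr hy.1) ⟨x, hxS⟩ (Finset.mem_subtype.mpr hx.2)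
    exact absurd h2 (lt_asymm h1)
  have hsum : ∑ i : Fin m, (E i).card ≤ Fintype.card (Equiv.Perm α) := by
    rw [← Finset.card_biUnion hdisjE]
    exact le_trans (Finset.card_le_card (Finset.subset_univ _)) (le_of_eq Finset.card_univ)
  have hmain : m * Fintype.card (Equiv.Perm α) ≤
      (a + b).choose a * Fintype.card (Equiv.Perm α) := by
    calc m * Fintype.card (Equiv.Perm α)
        = ∑ _i : Fin m, Fintype.card (Equiv.Perm α) := by
          rw [Finset.sum_const, Finset.card_univ, Fintype.card_fin, smul_eq_mul]
      _ ≤ ∑ i : Fin m, (a + b).choose a * (E i).card := Finset.sum_le_sum (fun i _ => hkey i)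
      _ = (a + b).choose a * ∑ i : Fin m, (E i).card := by rw [Finset.mul_sum]
      _ ≤ (a + b).choose a * Fintype.card (Equiv.Perm α) :=
          Nat.mul_le_mul_left _ hsum
  have hpos : 0 < Fintype.card (Equiv.Perm α) := Fintype.card_pos
  rw [Nat.mul_comm m _, Nat.mul_comm ((a + b).choose a) _] at hmain
  exact Nat.le_of_mul_le_mul_left hmain hpos
end

section
/- Let (A_1, B_1), …, (A_m, B_m) be pairs of finite sets, and write a_i = |A_i|, b_i = |B_i|. Suppose: (i) A_i ∩ B_i = ∅ for 1 ≤ i ≤ m; and (ii) A_i ∩ B_j ≠ ∅ for all i ≠ j. Then Σ_{i=1}^m 1 / C(a_i + b_i, a_i) ≤ 1. -/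
open Finset

/-- If some `B i` is empty, the cross condition forces the index type to be a singleton. -/
lemma wtf_empty_case {ι : Type} [Fintype ι] (A B : ι → Finset ℕ)
    (hcross : ∀ i j, i ≠ j → A i ∩ B j ≠ ∅) (i : ι) (hBi : B i = ∅) :
    ∑ j, (1 : ℝ) / (((A j).card + (B j).card).choose (A j).card) ≤ 1 := by
  have huniv : (Finset.univ : Finset ι) = {i} := by
    apply Finset.eq_singleton_iff_unique_mem.2
    refine ⟨Finset.mem_univ _, fun j _ => ?_⟩
    by_contra hj
    exact hcross j i hj (by simp [hBi])
  rw [huniv, Finset.sum_singleton, hBi]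
  simp

/-- Auxiliary induction on the size of the ground set. -/
lemma wtf_aux : ∀ (n : ℕ) (ι : Type) [Fintype ι] (A B : ι → Finset ℕ),
    (Finset.univ.biUnion (fun i => A i ∪ B i)).card ≤ n →
    (∀ i, A i ∩ B i = ∅) →
    (∀ i j, i ≠ j → A i ∩ B j ≠ ∅) →
    ∑ i, (1 : ℝ) / (((A i).card + (B i).card).choose (A i).card) ≤ 1 := by
  intro n
  induction n with
  | zero =>
    intro ι _ A B hU hdisj hcross
    rcases isEmpty_or_nonempty ι with hι | hι
    · simp
    obtain ⟨i⟩ := hι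
    have hBi : B i = ∅ := by
      have h0 : (Finset.univ.biUnion (fun i => A i ∪ B i)) = ∅ :=
        Finset.card_eq_zero.1 (Nat.le_zero.1 hU)
      have : B i ⊆ (∅ : Finset ℕ) := by
        rw [← h0]
        intro y hy
        exact Finset.mem_biUnion.2 ⟨i, Finset.mem_univ _, Finset.mem_union_right _ hy⟩
      exact Finset.subset_empty.1 this
    exact wtf_empty_case A B hcross i hBi
  | succ n ih =>
    intro ι _ A B hU hdisj hcross
    classical
    by_cases hBe : ∃ i, B i = ∅
    · obtain ⟨i, hBi⟩ := hBe
      exact wtf_empty_case A B hcross i hBi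
    push_neg at hBe
    rcases isEmpty_or_nonempty ι with hι | hι
    · simp
    set U := Finset.univ.biUnion (fun i => A i ∪ B i) with hUdef
    have hABU : ∀ i, A i ∪ B i ⊆ U := fun i =>
      Finset.subset_biUnion_of_mem (fun j => A j ∪ B j) (Finset.mem_univ i)
    have hUne : U.Nonempty := by
      obtain ⟨i⟩ := hι
      obtain ⟨y, hy⟩ := (hBe i)
      exact ⟨y, hABU i (Finset.mem_union_right _ hy)⟩
    set N := U.card with hNdef
    have hNpos : 0 < N := Finset.card_pos.2 hUne
    -- for each x ∈ U, the restricted family satisfies the hypothesis on a smaller ground set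
    have key : ∀ x ∈ U, ∑ i ∈ Finset.univ.filter (fun i => x ∉ A i),
        (1 : ℝ) / (((A i).card + ((B i).erase x).card).choose (A i).card) ≤ 1 := by
      intro x hx
      have hsub : (Finset.univ.biUnion
          (fun i : {i : ι // x ∉ A i} => A i.1 ∪ (B i.1).erase x)) ⊆ U.erase x := by
        intro y hy
        obtain ⟨i, -, hyi⟩ := Finset.mem_biUnion.1 hy
        rcases Finset.mem_union.1 hyi with h | h
        · exact Finset.mem_erase.2 ⟨fun hyx => i.2 (hyx ▸ h), hABU i.1 (Finset.mem_union_left _ h)⟩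
        · exact Finset.mem_erase.2 ⟨Finset.ne_of_mem_erase h,
            hABU i.1 (Finset.mem_union_right _ (Finset.mem_of_mem_erase h))⟩
      have hcard : (Finset.univ.biUnion
          (fun i : {i : ι // x ∉ A i} => A i.1 ∪ (B i.1).erase x)).card ≤ n := by
        have h1 := Finset.card_le_card hsub
        have h2 : (U.erase x).card = N - 1 := Finset.card_erase_of_mem hx
        omega
      have hd : ∀ i : {i : ι // x ∉ A i}, A i.1 ∩ (B i.1).erase x = ∅ := by
        intro i
        rw [Finset.eq_empty_iff_forall_notMem]
        intro y hy
        have := hdisj i.1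
        rw [Finset.eq_empty_iff_forall_notMem] at this
        exact this y (Finset.mem_inter.2 ⟨(Finset.mem_inter.1 hy).1,
          Finset.mem_of_mem_erase (Finset.mem_inter.1 hy).2⟩)
      have hc : ∀ i j : {i : ι // x ∉ A i}, i ≠ j → A i.1 ∩ (B j.1).erase x ≠ ∅ := by
        intro i j hij
        have hne : i.1 ≠ j.1 := fun h => hij (Subtype.ext h)
        obtain ⟨y, hy⟩ := Finset.nonempty_iff_ne_empty.2 (hcross i.1 j.1 hne)
        rw [← Finset.nonempty_iff_ne_empty]
        refine ⟨y, Finset.mem_inter.2 ⟨(Finset.mem_inter.1 hy).1, Finset.mem_erase.2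
          ⟨fun hyx => i.2 (hyx ▸ (Finset.mem_inter.1 hy).1), (Finset.mem_inter.1 hy).2⟩⟩⟩
      have := ih {i : ι // x ∉ A i} (fun i => A i.1) (fun i => (B i.1).erase x) hcard hd hc
      rwa [Finset.sum_subtype (p := fun i => x ∉ A i) (Finset.univ.filter (fun i => x ∉ A i))
        (by simp)
        (fun i => (1 : ℝ) / (((A i).card + ((B i).erase x).card).choose (A i).card))]
    -- sum the per-x bounds over x ∈ U
    have total : ∑ x ∈ U, (∑ i ∈ Finset.univ.filter (fun i => x ∉ A i),
        (1 : ℝ) / (((A i).card + ((B i).erase x).card).choose (A i).card)) ≤ (N : ℝ) := by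
      calc ∑ x ∈ U, (∑ i ∈ Finset.univ.filter (fun i => x ∉ A i),
            (1 : ℝ) / (((A i).card + ((B i).erase x).card).choose (A i).card))
          ≤ ∑ _x ∈ U, (1 : ℝ) := Finset.sum_le_sum key
        _ = (N : ℝ) := by simp [hNdef]
    -- swap the order of summation
    have swap : ∑ x ∈ U, (∑ i ∈ Finset.univ.filter (fun i => x ∉ A i),
        (1 : ℝ) / (((A i).card + ((B i).erase x).card).choose (A i).card))
        = ∑ i, ∑ x ∈ U \ A i,
          (1 : ℝ) / (((A i).card + ((B i).erase x).card).choose (A i).card) := by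
      simp_rw [Finset.sum_filter]
      rw [Finset.sum_comm]
      refine Finset.sum_congr rfl fun i _ => ?_
      rw [← Finset.sum_filter, Finset.sdiff_eq_filter]
    -- compute the inner sum for each i
    have inner : ∀ i, ∑ x ∈ U \ A i,
        (1 : ℝ) / (((A i).card + ((B i).erase x).card).choose (A i).card)
        = (N : ℝ) * ((1 : ℝ) / (((A i).card + (B i).card).choose (A i).card)) := by
      intro i
      obtain ⟨b', hb'⟩ : ∃ b', (B i).card = b' + 1 := by
        have : (B i).card ≠ 0 := by
          exact Finset.card_ne_zero.2 (hBe i)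
        exact ⟨(B i).card - 1, by omega⟩
      set a := (A i).card with hadef
      have hdisji : Disjoint (A i) (B i) := Finset.disjoint_iff_inter_eq_empty.2 (hdisj i)
      have hBsub : B i ⊆ U \ A i := by
        intro y hy
        refine Finset.mem_sdiff.2 ⟨hABU i (Finset.mem_union_right _ hy), fun hyA => ?_⟩
        exact (Finset.disjoint_left.1 hdisji) hyA hy
      have hABcard : (A i ∪ B i).card = a + b' + 1 := by
        rw [Finset.card_union_of_disjoint hdisji, hb', ← hadef]
        omega
      have hNle : a + b' + 1 ≤ N := by
        have h := Finset.card_le_card (hABU i)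
        rw [hABcard] at h
        exact h
      have hUABeq : (U \ A i) \ B i = U \ (A i ∪ B i) := by
        ext y
        simp only [Finset.mem_sdiff, Finset.mem_union]
        tauto
      have hcard2 : ((U \ A i) \ B i).card = N - (a + b' + 1) := by
        rw [hUABeq, Finset.card_sdiff_of_subset (hABU i), hABcard]
      have h1 : ∑ x ∈ (U \ A i) \ B i,
          (1 : ℝ) / ((a + ((B i).erase x).card).choose a)
          = ((N - (a + b' + 1) : ℕ) : ℝ) * ((1 : ℝ) / ((a + b' + 1).choose a)) := by
        have hcongr : ∀ x ∈ (U \ A i) \ B i,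
            (1 : ℝ) / ((a + ((B i).erase x).card).choose a)
            = (1 : ℝ) / ((a + b' + 1).choose a) := by
          intro x hx
          have hxB : x ∉ B i := (Finset.mem_sdiff.1 hx).2
          rw [Finset.erase_eq_of_notMem hxB, hb', ← Nat.add_assoc]
        rw [Finset.sum_congr rfl hcongr, Finset.sum_const, hcard2, nsmul_eq_mul]
      have h2 : ∑ x ∈ B i, (1 : ℝ) / ((a + ((B i).erase x).card).choose a)
          = ((b' : ℝ) + 1) * ((1 : ℝ) / ((a + b').choose a)) := by
        have hcongr : ∀ x ∈ B i,
            (1 : ℝ) / ((a + ((B i).erase x).card).choose a)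
            = (1 : ℝ) / ((a + b').choose a) := by
          intro x hx
          rw [Finset.card_erase_of_mem hx, hb']
          simp
        rw [Finset.sum_congr rfl hcongr, Finset.sum_const, hb', nsmul_eq_mul]
        push_cast
        ring
      rw [← Finset.sum_sdiff hBsub, h1, h2, hb', ← Nat.add_assoc]
      -- now the binomial identity
      have hs1 : (a + b').choose b' = (a + b').choose a := by
        rw [← Nat.choose_symm (by omega : b' ≤ a + b')]
        congr 1
        omega
      have hs2 : (a + b' + 1).choose (b' + 1) = (a + b' + 1).choose a := by
        rw [← Nat.choose_symm (by omega : b' + 1 ≤ a + b' + 1)]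
        congr 1
        omega
      have hnat : (b' + 1) * ((a + b' + 1).choose a) = (a + b' + 1) * ((a + b').choose a) := by
        have h := Nat.add_one_mul_choose_eq (a + b') b'
        rw [hs1, hs2] at h
        rw [mul_comm]
        exact h.symm
      have hc1 : (0 : ℝ) < ((a + b').choose a : ℝ) := by
        exact_mod_cast Nat.choose_pos (Nat.le_add_right a b')
      have hc2 : (0 : ℝ) < ((a + b' + 1).choose a : ℝ) := by
        exact_mod_cast Nat.choose_pos (by omega : a ≤ a + b' + 1)
      have hR : ((b' : ℝ) + 1) * ((a + b' + 1).choose a : ℝ)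
          = ((a : ℝ) + b' + 1) * ((a + b').choose a : ℝ) := by
        exact_mod_cast hnat
      rw [Nat.cast_sub hNle]
      push_cast
      field_simp
      linear_combination hR
    -- put everything together
    have main : (N : ℝ) * (∑ i, (1 : ℝ) / (((A i).card + (B i).card).choose (A i).card))
        ≤ (N : ℝ) := by
      calc (N : ℝ) * (∑ i, (1 : ℝ) / (((A i).card + (B i).card).choose (A i).card))
          = ∑ i, (N : ℝ) * ((1 : ℝ) / (((A i).card + (B i).card).choose (A i).card)) :=
            Finset.mul_sum _ _ _
        _ = ∑ i, ∑ x ∈ U \ A i,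
            (1 : ℝ) / (((A i).card + ((B i).erase x).card).choose (A i).card) :=
            Finset.sum_congr rfl fun i _ => (inner i).symm
        _ = ∑ x ∈ U, (∑ i ∈ Finset.univ.filter (fun i => x ∉ A i),
            (1 : ℝ) / (((A i).card + ((B i).erase x).card).choose (A i).card)) := swap.symm
        _ ≤ (N : ℝ) := total
    have hNpos' : (0 : ℝ) < (N : ℝ) := by exact_mod_cast hNpos
    have main' : (N : ℝ) * (∑ i, (1 : ℝ) / (((A i).card + (B i).card).choose (A i).card))
        ≤ (N : ℝ) * 1 := by rw [mul_one]; exact main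
    exact le_of_mul_le_mul_left main' hNpos'

/-- Bollobás's weighted Two Families Theorem. -/
theorem weighted_two_families (m : ℕ) (A B : Fin m → Finset ℕ)
    (hdisj : ∀ i, A i ∩ B i = ∅)
    (hcross : ∀ i j, i ≠ j → A i ∩ B j ≠ ∅) :
    ∑ i, (1 : ℝ) / (((A i).card + (B i).card).choose (A i).card) ≤ 1 := by
  exact wtf_aux _ (Fin m) A B le_rfl hdisj hcross
end

section
/- Let (A_1, B_1), …, (A_m, B_m) be pairs of non-trivial linear subspaces of V = ℝ^N with dim A_i ≤ a and dim B_i ≤ b for every i. Suppose: (i) dim(A_i ∩ B_i) = 0 for 1 ≤ i ≤ m; and (ii) dim(A_i ∩ B_j) > 0 for 1 ≤ i < j ≤ m. Then m ≤ C(a+b, a). -/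
open Module Submodule ExteriorAlgebra

lemma tf_generic_projection (n : ℕ) : ∀ (V : Type) [AddCommGroup V] [Module ℝ V]
    [FiniteDimensional ℝ V], finrank ℝ V = n → ∀ {ι : Type} [Finite ι] (d : ℕ)
    (U : ι → Submodule ℝ V), (∀ k, finrank ℝ ↥(U k) ≤ d) →
    ∃ φ : V →ₗ[ℝ] (Fin d → ℝ), ∀ k, Disjoint (LinearMap.ker φ) (U k) := by
  induction n using Nat.strong_induction_on with
  | _ n ih =>
    intro V _ _ _ hV ι hfinι d U hU
    haveI : Finite ι := hfinι
    haveI : Finite (Option ι) := Finite.of_equiv (ι ⊕ PUnit.{1}) (Equiv.optionEquivSumPUnit.{0,0} ι).symm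
    rcases le_or_gt n d with hnd | hdn
    · -- embed V into ℝ^d injectively
      rcases Nat.eq_zero_or_pos n with rfl | hn
      · refine ⟨0, fun k => ?_⟩
        have : Subsingleton V := by
          rw [← finrank_zero_iff (R := ℝ)]; omega
        have : U k = ⊥ := Subsingleton.elim _ _
        rw [this]
        exact disjoint_bot_right
      · have bV : Basis (Fin n) ℝ V := (finBasis ℝ V).reindex (finCongr hV)
        set f : Fin d → Fin n := fun j => if h : (j : ℕ) < n then ⟨j, h⟩ else ⟨0, hn⟩ with hf
        have hsurj : Function.Surjective f := by
          intro i
          refine ⟨⟨i, lt_of_lt_of_le i.2 hnd⟩, ?_⟩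
          simp [hf, i.2]
        refine ⟨(LinearMap.funLeft ℝ ℝ f).comp (bV.equivFun : V →ₗ[ℝ] (Fin n → ℝ)), fun k => ?_⟩
        have hker : LinearMap.ker ((LinearMap.funLeft ℝ ℝ f).comp
            (bV.equivFun : V →ₗ[ℝ] (Fin n → ℝ))) = ⊥ := by
          rw [LinearMap.ker_eq_bot]
          exact (LinearMap.funLeft_injective_of_surjective ℝ ℝ f hsurj).comp
            bV.equivFun.injective
        rw [hker]
        exact disjoint_bot_left
    · -- pick v outside all U k and ⊥, project to quotient
      have hnotall : ¬ (⋃ o : Option ι, ((Option.elim o ⊥ U : Submodule ℝ V) : Set V)) = Set.univ := by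
        intro h
        obtain ⟨o, ho⟩ := Subspace.exists_eq_top_of_iUnion_eq_univ h
        have : finrank ℝ ↥(Option.elim o ⊥ U) < n := by
          cases o with
          | none => show finrank ℝ ↥(⊥ : Submodule ℝ V) < n; rw [finrank_bot]; omega
          | some k => exact lt_of_le_of_lt (hU k) hdn
        rw [ho, finrank_top, hV] at this
        omega
      obtain ⟨v, hv⟩ : ∃ v : V, ∀ o : Option ι, v ∉ (Option.elim o ⊥ U : Submodule ℝ V) := by
        by_contra h
        push_neg at h
        apply hnotall
        ext x
        simp only [Set.mem_iUnion, Set.mem_univ, iff_true]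
        obtain ⟨o, ho⟩ := h x
        exact ⟨o, ho⟩
      have hv0 : v ≠ 0 := by
        intro h
        exact hv none (by simp [h])
      set p : Submodule ℝ V := ℝ ∙ v with hp
      have hrankp : finrank ℝ ↥p = 1 := finrank_span_singleton hv0
      have hQ : finrank ℝ (V ⧸ p) = n - 1 := by
        have := Submodule.finrank_quotient_add_finrank p
        omega
      obtain ⟨ψ, hψ⟩ := ih (n-1) (by omega) (V ⧸ p) hQ d (fun k => (U k).map p.mkQ)
        (fun k => le_trans (Submodule.finrank_map_le _ _) (hU k))
      refine ⟨ψ.comp p.mkQ, fun k => ?_⟩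
      rw [disjoint_def]
      intro x hxker hxU
      rw [LinearMap.mem_ker, LinearMap.comp_apply] at hxker
      have h1 : p.mkQ x ∈ LinearMap.ker ψ := hxker
      have h2 : p.mkQ x ∈ (U k).map p.mkQ := ⟨x, hxU, rfl⟩
      have h3 : p.mkQ x = 0 := by
        have hm : p.mkQ x ∈ (LinearMap.ker ψ ⊓ (U k).map p.mkQ : Submodule ℝ (V ⧸ p)) :=
          mem_inf.mpr ⟨h1, h2⟩
        rw [(hψ k).eq_bot] at hm
        exact hm
      rw [← LinearMap.mem_ker, Submodule.ker_mkQ] at h3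
      rw [hp, mem_span_singleton] at h3
      obtain ⟨c, rfl⟩ := h3
      rcases eq_or_ne c 0 with rfl | hc
      · simp
      · exact absurd ((U k).smul_mem_iff hc |>.mp hxU) (hv (some k))

lemma tf_extend {W : Type} [AddCommGroup W] [Module ℝ W] [FiniteDimensional ℝ W]
    (a : ℕ) : ∀ (k : ℕ) (A B : Submodule ℝ W), a - finrank ℝ ↥A = k →
    finrank ℝ ↥A ≤ a → Disjoint A B → a + finrank ℝ ↥B ≤ finrank ℝ W →
    ∃ A' : Submodule ℝ W, A ≤ A' ∧ finrank ℝ ↥A' = a ∧ Disjoint A' B := by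
  intro k
  induction k with
  | zero => intro A B hk hle hd _; exact ⟨A, le_rfl, by omega, hd⟩
  | succ k ih =>
    intro A B hk hle hd hsum
    have hlt : finrank ℝ ↥A < a := by omega
    -- A ⊔ B is proper
    have hfin : finrank ℝ ↥(A ⊔ B) < finrank ℝ W := by
      have h1 : finrank ℝ ↥(A ⊔ B) ≤ finrank ℝ ↥A + finrank ℝ ↥B := by
        have := Submodule.finrank_sup_add_finrank_inf_eq A B
        omega
      omega
    have hne : A ⊔ B ≠ ⊤ := by
      intro h
      rw [h, finrank_top] at hfin
      omega
    obtain ⟨v, hv⟩ : ∃ v, v ∉ A ⊔ B := by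
      by_contra h
      push_neg at h
      exact hne (eq_top_iff'.2 h)
    have hvA : v ∉ A := fun h => hv (le_sup_left (a := A) (b := B) h)
    have hv0 : v ≠ 0 := fun h => hv (h ▸ (A ⊔ B).zero_mem)
    set A' := A ⊔ (ℝ ∙ v) with hA'
    have hinf : A ⊓ (ℝ ∙ v) = ⊥ := by
      rw [eq_bot_iff]
      rintro x ⟨hxA, hxv⟩
      rw [SetLike.mem_coe, mem_span_singleton] at hxv
      obtain ⟨c, rfl⟩ := hxv
      rcases eq_or_ne c 0 with rfl | hc
      · simp
      · exact absurd ((A.smul_mem_iff hc).mp hxA) hvA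
    have hrank : finrank ℝ ↥A' = finrank ℝ ↥A + 1 := by
      have h2 := Submodule.finrank_sup_add_finrank_inf_eq A (ℝ ∙ v)
      rw [hinf, finrank_span_singleton hv0] at h2
      simpa using h2
    have hd' : Disjoint A' B := by
      rw [disjoint_def]
      intro x hxA' hxB
      obtain ⟨y, hy, z, hz, rfl⟩ := mem_sup.mp hxA'
      rw [mem_span_singleton] at hz
      obtain ⟨c, rfl⟩ := hz
      rcases eq_or_ne c 0 with rfl | hc
      · rw [zero_smul, add_zero] at hxB ⊢
        have : y ∈ A ⊓ B := mem_inf.mpr ⟨hy, hxB⟩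
        rw [hd.eq_bot] at this
        exact this
      · exfalso
        apply hv
        have : c • v = (y + c • v) + (-y) := by abel
        have hmem : c • v ∈ A ⊔ B := this ▸ add_mem (le_sup_right (a := A) hxB) (le_sup_left (b := B) (neg_mem hy))
        exact (A ⊔ B).smul_mem_iff hc |>.mp hmem
    obtain ⟨A'', h1, h2, h3⟩ := ih A' B (by omega) (by omega) hd' hsum
    exact ⟨A'', le_trans le_sup_left h1, h2, h3⟩

lemma tf_iMulti_append {M : Type*} [AddCommGroup M] [Module ℝ M] {p q : ℕ}
    (u : Fin p → M) (w : Fin q → M) :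
    ιMulti ℝ (p + q) (Fin.append u w) = ιMulti ℝ p u * ιMulti ℝ q w := by
  have h : (fun i => ι ℝ (Fin.append u w i)) =
      Fin.append (fun i => ι ℝ (u i)) (fun i => ι ℝ (w i)) := by
    ext i
    refine Fin.addCases (fun i => ?_) (fun i => ?_) i <;>
      simp [Fin.append_left, Fin.append_right]
  rw [ιMulti_apply, ιMulti_apply, ιMulti_apply, h, List.ofFn_fin_append, List.prod_append]

lemma tf_iMulti_basis_ne_zero {W : Type} [AddCommGroup W] [Module ℝ W] {n : ℕ}
    (c : Basis (Fin n) ℝ W) : ιMulti ℝ n ⇑c ≠ 0 := by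
  intro h
  have := congrArg (liftAlternating (R := ℝ) (M := W) (N := ℝ)
      (Function.update 0 n c.det)) h
  rw [liftAlternating_apply_ιMulti, map_zero, Function.update_self, Basis.det_self] at this
  exact one_ne_zero this

lemma tf_iMulti_mem_span {n N : ℕ} (v : Fin n → (Fin N → ℝ)) :
    ιMulti ℝ n v ∈ span ℝ (Set.range (fun s : {s : Finset (Fin N) // s.card = n} =>
      ιMulti ℝ n fun i => Pi.basisFun ℝ (Fin N) (s.1.orderIsoOfFin s.2 i))) := by
  classical
  set e := Pi.basisFun ℝ (Fin N) with he
  set T := Set.range (fun s : {s : Finset (Fin N) // s.card = n} =>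
      ιMulti ℝ n fun i => e (s.1.orderIsoOfFin s.2 i)) with hT
  -- step 1: every ιMulti (e ∘ r) is in span T
  have key : ∀ r : Fin n → Fin N, ιMulti ℝ n (fun i => e (r i)) ∈ span ℝ T := by
    intro r
    by_cases hinj : Function.Injective r
    · set s : Finset (Fin N) := Finset.univ.image r with hs
      have hcard : s.card = n := by
        rw [hs, Finset.card_image_of_injective _ hinj, Finset.card_univ, Fintype.card_fin]
      set mono : Fin n → Fin N := fun i => (s.orderIsoOfFin hcard i : Fin N) with hmono
      have hrs : ∀ k, r k ∈ s := fun k => by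
        rw [hs]; exact Finset.mem_image_of_mem r (Finset.mem_univ k)
      set σ : Fin n → Fin n := fun k => (s.orderIsoOfFin hcard).symm ⟨r k, hrs k⟩ with hσ
      have hσinj : Function.Injective σ := by
        intro x y hxy
        apply hinj
        have := congrArg (fun z => ((s.orderIsoOfFin hcard z : s) : Fin N)) hxy
        simpa [hσ] using this
      have hσbij : Function.Bijective σ := (Finite.injective_iff_bijective).1 hσinj
      set σe : Equiv.Perm (Fin n) := Equiv.ofBijective σ hσbij with hσe
      have hcomp : (fun i => e (r i)) = (fun i => e (mono i)) ∘ σe := by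
        funext k
        simp only [Function.comp_apply, hσe, Equiv.ofBijective_apply, hσ, hmono]
        congr 1
        have : (s.orderIsoOfFin hcard) ((s.orderIsoOfFin hcard).symm ⟨r k, hrs k⟩) =
            ⟨r k, hrs k⟩ := OrderIso.apply_symm_apply _ _
        rw [this]
      rw [hcomp, AlternatingMap.map_perm]
      have hgen : ιMulti ℝ n (fun i => e (mono i)) ∈ T :=
        ⟨⟨s, hcard⟩, rfl⟩
      rcases Int.units_eq_one_or (Equiv.Perm.sign σe) with h | h
      · rw [h]
        simpa using subset_span hgen
      · have hmem : ιMulti ℝ n (fun i => e (mono i)) ∈ span ℝ T := subset_span hgen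
        rw [h, Units.smul_def]
        simpa using neg_mem hmem
    · rw [Function.not_injective_iff] at hinj
      obtain ⟨i, j, hij, hne⟩ := hinj
      rw [AlternatingMap.map_eq_zero_of_eq _ _ (by rw [hij]) hne]
      exact zero_mem _
  -- step 2: expand v in the basis
  have hv : ∀ k, v k = ∑ j : Fin N, (e.repr (v k)) j • e j := fun k => (e.sum_repr (v k)).symm
  have heq : ιMulti ℝ n v = ιMulti ℝ n (fun k => ∑ j : Fin N, (e.repr (v k)) j • e j) := by
    congr 1; funext k; exact hv k
  rw [heq]
  rw [show (ιMulti ℝ n) (fun k => ∑ j : Fin N, (e.repr (v k)) j • e j) =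
            (ιMulti ℝ n).toMultilinearMap (fun k => ∑ j : Fin N, (e.repr (v k)) j • e j) from rfl,
    MultilinearMap.map_sum]
  apply Submodule.sum_mem
  intro r _
  have hsm : (ιMulti ℝ n).toMultilinearMap (fun k => (e.repr (v k)) (r k) • e (r k)) =
      (∏ k, (e.repr (v k)) (r k)) • (ιMulti ℝ n).toMultilinearMap (fun k => e (r k)) :=
    MultilinearMap.map_smul_univ _ _ _
  rw [hsm]
  exact Submodule.smul_mem _ _ (key r)

/-- The uniform skew subspace Two Families Theorem (Lovász, Frankl). -/
theorem uniform_skew_two_families_subspaces (N m a b : ℕ)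
    (A B : Fin m → Submodule ℝ (Fin N → ℝ))
    (hA : ∀ i, A i ≠ ⊥) (hB : ∀ i, B i ≠ ⊥)
    (ha : ∀ i, Module.finrank ℝ ↥(A i) ≤ a) (hb : ∀ i, Module.finrank ℝ ↥(B i) ≤ b)
    (hdisj : ∀ i, Module.finrank ℝ ↥(A i ⊓ B i) = 0)
    (hskew : ∀ i j, i < j → 0 < Module.finrank ℝ ↥(A i ⊓ B j)) :
    m ≤ (a + b).choose a := by
  classical
  rcases Nat.eq_zero_or_pos m with rfl | hm
  · exact Nat.zero_le _
  have i00 : Fin m := ⟨0, hm⟩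
  have ha1 : 1 ≤ a := le_trans (Nat.one_le_iff_ne_zero.2
    (fun h => hA i00 (Submodule.finrank_eq_zero.mp h))) (ha i00)
  have hb1 : 1 ≤ b := le_trans (Nat.one_le_iff_ne_zero.2
    (fun h => hB i00 (Submodule.finrank_eq_zero.mp h))) (hb i00)
  have hABbot : ∀ i, A i ⊓ B i = ⊥ := fun i => Submodule.finrank_eq_zero.mp (hdisj i)
  have hABne : ∀ i j, i < j → A i ⊓ B j ≠ ⊥ := fun i j hij h => by
    have := hskew i j hij
    rw [h] at this
    simp [finrank_bot] at this
  -- Step 1: generic projection to W := ℝ^(a+b)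
  have hU : ∀ p : Fin m × Fin m, finrank ℝ ↥(A p.1 ⊔ B p.2) ≤ a + b := by
    intro p
    have h1 := Submodule.finrank_sup_add_finrank_inf_eq (A p.1) (B p.2)
    have h2 := ha p.1
    have h3 := hb p.2
    omega
  obtain ⟨φ, hφ⟩ := tf_generic_projection (finrank ℝ (Fin N → ℝ)) (Fin N → ℝ) rfl (a + b)
    (fun p : Fin m × Fin m => A p.1 ⊔ B p.2) hU
  set A1 : Fin m → Submodule ℝ (Fin (a + b) → ℝ) := fun i => (A i).map φ with hA1def
  set B1 : Fin m → Submodule ℝ (Fin (a + b) → ℝ) := fun i => (B i).map φ with hB1def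
  have hA1r : ∀ i, finrank ℝ ↥(A1 i) ≤ a := fun i =>
    le_trans (Submodule.finrank_map_le φ (A i)) (ha i)
  have hB1r : ∀ i, finrank ℝ ↥(B1 i) ≤ b := fun i =>
    le_trans (Submodule.finrank_map_le φ (B i)) (hb i)
  have hd1 : ∀ i, Disjoint (A1 i) (B1 i) := by
    intro i
    rw [disjoint_def]
    rintro x ⟨p, hp, rfl⟩ hx
    obtain ⟨q, hq, hq'⟩ := hx
    have hpq : p - q ∈ LinearMap.ker φ := by
      rw [LinearMap.mem_ker, map_sub, hq', sub_self]
    have hpq2 : p - q ∈ A i ⊔ B i :=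
      sub_mem (le_sup_left (b := B i) hp) (le_sup_right (a := A i) hq)
    have h0 : p - q = 0 := by
      have hmm : p - q ∈ LinearMap.ker φ ⊓ (A i ⊔ B i) := mem_inf.mpr ⟨hpq, hpq2⟩
      rw [(hφ (i, i)).eq_bot] at hmm
      exact hmm
    have hpeq : p = q := sub_eq_zero.mp h0
    have : p ∈ A i ⊓ B i := mem_inf.mpr ⟨hp, hpeq ▸ hq⟩
    rw [hABbot i] at this
    rw [this, map_zero]
  have hne1 : ∀ i j, i < j → A1 i ⊓ B1 j ≠ ⊥ := by
    intro i j hij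
    obtain ⟨v, hv, hv0⟩ := (Submodule.ne_bot_iff _).mp (hABne i j hij)
    rw [Submodule.ne_bot_iff]
    refine ⟨φ v, mem_inf.mpr ⟨⟨v, (mem_inf.mp hv).1, rfl⟩, ⟨v, (mem_inf.mp hv).2, rfl⟩⟩, ?_⟩
    intro h
    have hk : v ∈ LinearMap.ker φ ⊓ (A i ⊔ B j) :=
      mem_inf.mpr ⟨LinearMap.mem_ker.mpr h, le_sup_left (b := B j) (mem_inf.mp hv).1⟩
    rw [(hφ (i, j)).eq_bot] at hk
    exact hv0 hk
  -- Step 2: extension to exact dimensions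
  have hrkW : finrank ℝ (Fin (a + b) → ℝ) = a + b := Module.finrank_fin_fun ℝ
  have hstepA : ∀ i, ∃ A' : Submodule ℝ (Fin (a + b) → ℝ),
      A1 i ≤ A' ∧ finrank ℝ ↥A' = a ∧ Disjoint A' (B1 i) := fun i =>
    tf_extend a (a - finrank ℝ ↥(A1 i)) (A1 i) (B1 i) rfl (hA1r i) (hd1 i)
      (by rw [hrkW]; have := hB1r i; omega)
  choose A2 hA2le hA2rank hA2disj using hstepA
  have hstepB : ∀ i, ∃ B' : Submodule ℝ (Fin (a + b) → ℝ),
      B1 i ≤ B' ∧ finrank ℝ ↥B' = b ∧ Disjoint B' (A2 i) := fun i =>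
    tf_extend b (b - finrank ℝ ↥(B1 i)) (B1 i) (A2 i) rfl (hB1r i) ((hA2disj i).symm)
      (by rw [hrkW, hA2rank i]; omega)
  choose B2 hB2le hB2rank hB2disj using hstepB
  have hne2 : ∀ i j, i < j → A2 i ⊓ B2 j ≠ ⊥ := by
    intro i j hij h
    apply hne1 i j hij
    rw [eq_bot_iff] at h ⊢
    exact le_trans (inf_le_inf (hA2le i) (hB2le j)) h
  -- Step 3: bases and wedge products
  set W := Fin (a + b) → ℝ with hW
  have bA : ∀ i, Basis (Fin a) ℝ ↥(A2 i) := fun i =>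
    (finBasis ℝ ↥(A2 i)).reindex (finCongr (hA2rank i))
  have bB : ∀ i, Basis (Fin b) ℝ ↥(B2 i) := fun i =>
    (finBasis ℝ ↥(B2 i)).reindex (finCongr (hB2rank i))
  set u : ∀ _ : Fin m, Fin a → W := fun i k => ((bA i k : ↥(A2 i)) : W) with hu
  set w : ∀ _ : Fin m, Fin b → W := fun i k => ((bB i k : ↥(B2 i)) : W) with hw
  have hspanu : ∀ i, span ℝ (Set.range (u i)) = A2 i := by
    intro i
    have : u i = (A2 i).subtype ∘ ⇑(bA i) := rfl
    rw [this, Set.range_comp, Submodule.span_image, (bA i).span_eq, Submodule.map_subtype_top]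
  have hspanw : ∀ i, span ℝ (Set.range (w i)) = B2 i := by
    intro i
    have : w i = (B2 i).subtype ∘ ⇑(bB i) := rfl
    rw [this, Set.range_comp, Submodule.span_image, (bB i).span_eq, Submodule.map_subtype_top]
  have hliu : ∀ i, LinearIndependent ℝ (u i) := fun i =>
    (bA i).linearIndependent.map' (A2 i).subtype (Submodule.ker_subtype _)
  have hliw : ∀ i, LinearIndependent ℝ (w i) := fun i =>
    (bB i).linearIndependent.map' (B2 i).subtype (Submodule.ker_subtype _)
  set x : Fin m → ExteriorAlgebra ℝ W := fun i => ιMulti ℝ a (u i) with hx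
  set y : Fin m → ExteriorAlgebra ℝ W := fun j => ιMulti ℝ b (w j) with hy
  have happend : ∀ i j, Fin.append (u i) (w j) ∘ ⇑finSumFinEquiv = Sum.elim (u i) (w j) := by
    intro i j
    funext k
    rcases k with k | k
    · simp [Fin.append_left]
    · simp [Fin.append_right]
  have hxy0 : ∀ i j, i < j → x i * y j = 0 := by
    intro i j hij
    rw [hx, hy, ← tf_iMulti_append]
    haveI : NoZeroSMulDivisors ℝ (ExteriorAlgebra ℝ W) :=
      ⟨fun {c z} h => by
        rcases eq_or_ne c 0 with rfl | hc
        · exact Or.inl rfl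
        · refine Or.inr ?_
          have := congrArg (fun t => c⁻¹ • t) h
          simpa [smul_smul, inv_mul_cancel₀ hc] using this⟩
    apply AlternatingMap.map_linearDependent
    intro hli
    have hli2 : LinearIndependent ℝ (Sum.elim (u i) (w j)) := by
      rw [← happend i j]
      exact hli.comp _ finSumFinEquiv.injective
    rw [linearIndependent_sum] at hli2
    obtain ⟨-, -, hdisj2⟩ := hli2
    rw [Sum.elim_comp_inl, Sum.elim_comp_inr, hspanu, hspanw] at hdisj2
    exact hne2 i j hij hdisj2.eq_bot
  have hxyne : ∀ i, x i * y i ≠ 0 := by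
    intro i
    have hli : LinearIndependent ℝ (Fin.append (u i) (w i)) := by
      rw [← linearIndependent_equiv finSumFinEquiv, happend i i]
      rw [linearIndependent_sum]
      refine ⟨?_, ?_, ?_⟩
      · rw [Sum.elim_comp_inl]; exact hliu i
      · rw [Sum.elim_comp_inr]; exact hliw i
      · rw [Sum.elim_comp_inl, Sum.elim_comp_inr, hspanu, hspanw]
        exact (hB2disj i).symm
    haveI : Nonempty (Fin (a + b)) := ⟨⟨0, by omega⟩⟩
    have hcard : Fintype.card (Fin (a + b)) = finrank ℝ W := by
      rw [Fintype.card_fin, hrkW]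
    set c := basisOfLinearIndependentOfCardEqFinrank hli hcard with hc
    have hcoe : ⇑c = Fin.append (u i) (w i) :=
      coe_basisOfLinearIndependentOfCardEqFinrank hli hcard
    rw [hx, hy, ← tf_iMulti_append, ← hcoe]
    exact tf_iMulti_basis_ne_zero c
  -- Step 4: triangular independence
  have hxli : LinearIndependent ℝ x := by
    rw [Fintype.linearIndependent_iff]
    intro c hc
    by_contra hnot
    push_neg at hnot
    obtain ⟨i0, hi0⟩ := hnot
    have hSne : (Finset.univ.filter (fun i => c i ≠ 0)).Nonempty := ⟨i0, by simp [hi0]⟩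
    obtain ⟨j, hjS, hjmax⟩ : ∃ j ∈ Finset.univ.filter (fun i => c i ≠ 0),
        ∀ i ∈ Finset.univ.filter (fun i => c i ≠ 0), i ≤ j :=
      ⟨_, (Finset.univ.filter (fun i => c i ≠ 0)).max'_mem hSne,
        fun i hi => Finset.le_max' _ i hi⟩
    have hcj : c j ≠ 0 := (Finset.mem_filter.mp hjS).2
    have hmul : ∑ i, c i • (x i * y j) = 0 := by
      have := congrArg (fun z => z * y j) hc
      simpa [Finset.sum_mul, smul_mul_assoc] using this
    rw [Finset.sum_eq_single j] at hmul
    · rcases smul_eq_zero.mp hmul with h | h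
      · exact hcj h
      · exact hxyne j h
    · intro i _ hij
      rcases lt_or_gt_of_ne hij with hlt | hgt
      · rw [hxy0 i j hlt, smul_zero]
      · have : c i = 0 := by
          by_contra h
          exact absurd (hjmax i (by simp [h])) (not_le.2 hgt)
        rw [this, zero_smul]
    · intro h
      exact absurd (Finset.mem_univ j) h
  -- Step 5: span bound
  have hmem : ∀ i, x i ∈ span ℝ (Set.range
      (fun s : {s : Finset (Fin (a + b)) // s.card = a} =>
        ιMulti ℝ a fun k => Pi.basisFun ℝ (Fin (a + b)) (s.1.orderIsoOfFin s.2 k))) :=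
    fun i => tf_iMulti_mem_span (u i)
  set P := span ℝ (Set.range
      (fun s : {s : Finset (Fin (a + b)) // s.card = a} =>
        ιMulti ℝ a fun k => Pi.basisFun ℝ (Fin (a + b)) (s.1.orderIsoOfFin s.2 k))) with hP
  haveI : FiniteDimensional ℝ ↥P := FiniteDimensional.span_of_finite ℝ (Set.finite_range _)
  set x' : Fin m → ↥P := fun i => ⟨x i, hmem i⟩ with hx'
  have hx'li : LinearIndependent ℝ x' := by
    apply LinearIndependent.of_comp P.subtype
    have : P.subtype ∘ x' = x := rfl
    rw [this]
    exact hxli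
  have h1 : m ≤ finrank ℝ ↥P := by
    simpa using hx'li.fintype_card_le_finrank
  have h2 : finrank ℝ ↥P ≤ Fintype.card {s : Finset (Fin (a + b)) // s.card = a} :=
    finrank_range_le_card _
  have h3 : Fintype.card {s : Finset (Fin (a + b)) // s.card = a} = (a + b).choose a := by
    rw [Fintype.card_finset_len, Fintype.card_fin]
  omega
end

section
/- Let (A_1, B_1), …, (A_m, B_m) be pairs of finite sets with |A_i| = a and |B_i| = b for every i. Suppose: (i) A_i ∩ B_i = ∅ for 1 ≤ i ≤ m; and (ii) A_i ∩ B_j ≠ ∅ for 1 ≤ i < j ≤ m. Then m ≤ C(a+b, b). -/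
open Matrix Finset

namespace SkewTF

variable {a b : ℕ}

abbrev ι' (a b : ℕ) := Fin a ⊕ Fin b
abbrev κ' (a b : ℕ) := {s : Finset (ι' a b) // s.card = a}

lemma card_ι : Fintype.card (ι' a b) = a + b := by simp

lemma card_compl_eq (T : κ' a b) : (T.1ᶜ).card = b := by
  rw [Finset.card_compl, card_ι, T.2]; omega

noncomputable def eA (T : κ' a b) : Fin a ≃ {x : ι' a b // x ∈ T.1} :=
  (Finset.equivFinOfCardEq T.2).symm

noncomputable def eB (T : κ' a b) : Fin b ≃ {x : ι' a b // x ∈ T.1ᶜ} :=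
  (Finset.equivFinOfCardEq (card_compl_eq T)).symm

noncomputable def colA (T : κ' a b) (p : Fin a) : ι' a b := (eA T p : ι' a b)
noncomputable def colB (T : κ' a b) (q : Fin b) : ι' a b := (eB T q : ι' a b)

lemma colA_mem (T : κ' a b) (p : Fin a) : colA T p ∈ T.1 := (eA T p).2

lemma colB_not_mem (T : κ' a b) (q : Fin b) : colB T q ∉ T.1 := by
  have h := (eB T q).2
  rw [Finset.mem_compl] at h
  exact h

lemma colA_injective (T : κ' a b) : Function.Injective (colA T) := fun p p' h =>
  (eA T).injective (Subtype.ext h)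

noncomputable def colPerm (T : κ' a b) : Equiv.Perm (ι' a b) :=
  (Equiv.sumCongr (eA T)
    ((eB T).trans (Equiv.subtypeEquivRight (fun x => Finset.mem_compl)))).trans
    (Equiv.sumCompl (· ∈ T.1))

lemma colPerm_inl (T : κ' a b) (p : Fin a) : colPerm T (Sum.inl p) = colA T p := rfl

lemma colPerm_inr (T : κ' a b) (q : Fin b) : colPerm T (Sum.inr q) = colB T q := rfl

noncomputable def sgn (T : κ' a b) : ℚ := ((Equiv.Perm.sign (colPerm T) : ℤ) : ℚ)

lemma sgn_mul_self (T : κ' a b) : sgn T * sgn T = 1 := by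
  unfold sgn
  rcases Int.units_eq_one_or (Equiv.Perm.sign (colPerm T)) with h | h <;> rw [h] <;> norm_num

noncomputable def minorA (x : Fin a → ι' a b → ℚ) (T : κ' a b) : ℚ :=
  Matrix.det (Matrix.of fun p p' => x p (colA T p'))

noncomputable def minorB (y : Fin b → ι' a b → ℚ) (T : κ' a b) : ℚ :=
  Matrix.det (Matrix.of fun q q' => y q (colB T q'))


/-- Evaluation of a multilinear map at a fixed point, as a linear map. -/
def evalAt (y : Fin b → ι' a b → ℚ) :
    MultilinearMap ℚ (fun _ : Fin b => (ι' a b → ℚ)) ℚ →ₗ[ℚ] ℚ where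
  toFun f := f y
  map_add' _ _ := rfl
  map_smul' _ _ := rfl

noncomputable def Fside (y : Fin b → ι' a b → ℚ) :
    MultilinearMap ℚ (fun _ : Fin a => (ι' a b → ℚ)) ℚ :=
  (evalAt y).compMultilinearMap
    ((Matrix.detRowAlternating :
      ((ι' a b → ℚ) [⋀^(ι' a b)]→ₗ[ℚ] ℚ)).toMultilinearMap.currySum)

lemma Fside_apply (y : Fin b → ι' a b → ℚ) (x : Fin a → ι' a b → ℚ) :
    Fside y x = Matrix.det (Matrix.of (Sum.elim x y)) := rfl

noncomputable def Gside (y : Fin b → ι' a b → ℚ) :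
    MultilinearMap ℚ (fun _ : Fin a => (ι' a b → ℚ)) ℚ :=
  ∑ T : κ' a b, (sgn T * minorB y T) •
    ((Matrix.detRowAlternating :
      ((Fin a → ℚ) [⋀^(Fin a)]→ₗ[ℚ] ℚ)).toMultilinearMap.compLinearMap
      (fun _ => LinearMap.funLeft ℚ ℚ (colA T)))

lemma Gside_apply (y : Fin b → ι' a b → ℚ) (x : Fin a → ι' a b → ℚ) :
    Gside y x = ∑ T : κ' a b, (sgn T * minorB y T) * minorA x T := by
  simp [Gside, minorA, MultilinearMap.sum_apply]
  rfl


lemma laplace (y : Fin b → ι' a b → ℚ) (x : Fin a → ι' a b → ℚ) :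
    Matrix.det (Matrix.of (Sum.elim x y)) =
      ∑ T : κ' a b, (sgn T * minorB y T) * minorA x T := by
  suffices h : Fside y = Gside y by rw [← Fside_apply, h, Gside_apply]
  apply Module.Basis.ext_multilinear (fun _ => Pi.basisFun ℚ (ι' a b))
  intro c
  simp only [Pi.basisFun_apply]
  by_cases hc : Function.Injective c
  · -- injective case
    have hcard : (Finset.image c Finset.univ).card = a := by
      rw [Finset.card_image_of_injective _ hc, Finset.card_univ, Fintype.card_fin]
    set T0 : κ' a b := ⟨Finset.image c Finset.univ, hcard⟩ with hT0
    have memT0 : ∀ p, c p ∈ T0.1 := fun p => Finset.mem_image_of_mem _ (Finset.mem_univ p)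
    have hbij : Function.Bijective (fun p => (eA T0).symm ⟨c p, memT0 p⟩) := by
      refine Finite.injective_iff_bijective.mp ?_
      intro p p' h
      have h2 : (⟨c p, memT0 p⟩ : {z // z ∈ T0.1}) = ⟨c p', memT0 p'⟩ :=
        (eA T0).symm.injective h
      exact hc (congrArg Subtype.val h2)
    set π : Equiv.Perm (Fin a) := Equiv.ofBijective _ hbij with hπdef
    have hπ : ∀ p, colA T0 (π p) = c p := by
      intro p
      show ((eA T0) (π p) : ι' a b) = c p
      rw [hπdef]
      simp [Equiv.ofBijective_apply]
    have hG : Gside y (fun i => Pi.single (c i) 1) =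
        (sgn T0 * minorB y T0) * ((Equiv.Perm.sign π : ℤ) : ℚ) := by
      rw [Gside_apply]
      rw [Finset.sum_eq_single T0]
      · congr 1
        have hmat : (Matrix.of fun p p' => Pi.single (M := fun _ => ℚ) (c p) 1 (colA T0 p'))
            = (1 : Matrix (Fin a) (Fin a) ℚ).submatrix π id := by
          ext p p'
          simp only [Matrix.of_apply, Matrix.submatrix_apply, id_eq, Matrix.one_apply,
            Pi.single_apply]
          by_cases h : π p = p'
          · rw [if_pos (by rw [← h, hπ p]), if_pos h]
          · rw [if_neg (fun hh => h ((colA_injective T0 (hh.trans (hπ p).symm)).symm)),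
              if_neg h]
        simp only [minorA]
        rw [hmat, Matrix.det_permute, Matrix.det_one, mul_one]
      · intro T _ hTne
        have hex : ∃ p, c p ∉ T.1 := by
          by_contra hcon
          push_neg at hcon
          have hsub : T0.1 ⊆ T.1 := by
            intro z hz
            obtain ⟨p, _, rfl⟩ := Finset.mem_image.mp hz
            exact hcon p
          have heq : T0.1 = T.1 :=
            Finset.eq_of_subset_of_card_le hsub (by rw [T.2, hcard])
          exact hTne (Subtype.ext heq.symm)
        obtain ⟨p, hp⟩ := hex
        have hz : minorA (fun i => Pi.single (c i) 1) T = 0 := by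
          apply Matrix.det_eq_zero_of_row_eq_zero p
          intro p'
          simp only [Matrix.of_apply]
          exact Pi.single_eq_of_ne (fun h => hp (by rw [← h]; exact colA_mem T p')) 1
        rw [hz, mul_zero]
      · intro h; exact absurd (Finset.mem_univ T0) h
    have hF : Fside y (fun i => Pi.single (c i) 1) =
        (sgn T0 * minorB y T0) * ((Equiv.Perm.sign π : ℤ) : ℚ) := by
      rw [Fside_apply]
      have h1 : Matrix.of (Sum.elim (fun i => Pi.single (M := fun _ => ℚ) (c i) 1) y)
          = (Matrix.of (Sum.elim (fun p => Pi.single (M := fun _ => ℚ) (colA T0 p) 1) y)).submatrix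
              (Equiv.sumCongr π (Equiv.refl (Fin b))) id := by
        ext r k
        cases r with
        | inl p =>
          simp only [Matrix.of_apply, Sum.elim_inl, Matrix.submatrix_apply,
            Equiv.sumCongr_apply, Sum.map_inl, id_eq]
          rw [hπ p]
        | inr q =>
          simp only [Matrix.of_apply, Sum.elim_inr, Matrix.submatrix_apply,
            Equiv.sumCongr_apply, Sum.map_inr, id_eq, Equiv.refl_apply]
      have h2 : (Matrix.of (Sum.elim (fun p => Pi.single (M := fun _ => ℚ) (colA T0 p) 1)
              y)).submatrix id (colPerm T0)
          = Matrix.fromBlocks (1 : Matrix (Fin a) (Fin a) ℚ) 0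
              (Matrix.of fun q p => y q (colA T0 p)) (Matrix.of fun q q' => y q (colB T0 q')) := by
        ext r k
        cases r with
        | inl p =>
          cases k with
          | inl p' =>
            simp only [Matrix.submatrix_apply, id_eq, Matrix.of_apply, Sum.elim_inl,
              colPerm_inl, Matrix.fromBlocks_apply₁₁, Matrix.one_apply, Pi.single_apply]
            by_cases h : p = p'
            · rw [if_pos (by rw [h]), if_pos h]
            · rw [if_neg (fun hh => h ((colA_injective T0 hh).symm)), if_neg h]
          | inr q =>
            simp only [Matrix.submatrix_apply, id_eq, Matrix.of_apply, Sum.elim_inl,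
              colPerm_inr, Matrix.fromBlocks_apply₁₂, Matrix.zero_apply]
            exact Pi.single_eq_of_ne (fun h => colB_not_mem T0 q (by rw [h]; exact colA_mem T0 p)) 1
        | inr q =>
          cases k with
          | inl p' =>
            simp only [Matrix.submatrix_apply, id_eq, Matrix.of_apply, Sum.elim_inr,
              colPerm_inl, Matrix.fromBlocks_apply₂₁]
          | inr q' =>
            simp only [Matrix.submatrix_apply, id_eq, Matrix.of_apply, Sum.elim_inr,
              colPerm_inr, Matrix.fromBlocks_apply₂₂]
      have hdet2 : ((Matrix.of (Sum.elim (fun p => Pi.single (M := fun _ => ℚ) (colA T0 p) 1)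
            y)).submatrix id (colPerm T0)).det = minorB y T0 := by
        rw [h2, Matrix.det_fromBlocks_zero₁₂, Matrix.det_one, one_mul]
        simp only [minorB]
      have hdet0 : (Matrix.of (Sum.elim (fun p => Pi.single (M := fun _ => ℚ) (colA T0 p) 1)
            y)).det = sgn T0 * minorB y T0 := by
        have hp' := Matrix.det_permute' (colPerm T0)
          (Matrix.of (Sum.elim (fun p => Pi.single (M := fun _ => ℚ) (colA T0 p) 1) y))
        rw [hdet2] at hp'
        have e : ((Equiv.Perm.sign (colPerm T0) : ℤ) : ℚ) = sgn T0 := rfl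
        rw [hp', ← mul_assoc, e, sgn_mul_self, one_mul]
      rw [h1, Matrix.det_permute, hdet0]
      have hs : ((Equiv.Perm.sign (Equiv.sumCongr π (Equiv.refl (Fin b)))) : ℚ)
          = ((Equiv.Perm.sign π : ℤ) : ℚ) := by
        rw [Equiv.Perm.sign_sumCongr]
        simp
      rw [hs]
      ring
    rw [hF, hG]
  · -- non-injective case
    obtain ⟨p, p', hpp', hne⟩ := Function.not_injective_iff.mp hc
    have hF : Fside y (fun i => Pi.single (c i) 1) = 0 := by
      rw [Fside_apply]
      apply Matrix.det_zero_of_row_eq (show (Sum.inl p : ι' a b) ≠ Sum.inl p' by simp [hne])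
      funext k
      simp only [Matrix.of_apply, Sum.elim_inl]
      exact congrFun (congrArg (fun z => Pi.single (M := fun _ => ℚ) z 1) hpp') k
    have hG : Gside y (fun i => Pi.single (c i) 1) = 0 := by
      rw [Gside_apply]
      apply Finset.sum_eq_zero
      intro T _
      have hz : minorA (fun i => Pi.single (c i) 1) T = 0 := by
        apply Matrix.det_zero_of_row_eq hne
        funext q
        simp only [Matrix.of_apply]
        exact congrFun (congrArg (fun z => Pi.single (M := fun _ => ℚ) z 1) hpp') (colA T q)
      rw [hz, mul_zero]
    rw [hF, hG]


end SkewTF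

open SkewTF

/-- The uniform skew Two Families Theorem. -/
theorem uniform_skew_two_families (m a b : ℕ) (A B : Fin m → Finset ℕ)
    (hA : ∀ i, (A i).card = a) (hB : ∀ i, (B i).card = b)
    (hdisj : ∀ i, A i ∩ B i = ∅)
    (hskew : ∀ i j, i < j → A i ∩ B j ≠ ∅) :
    m ≤ (a + b).choose b := by
  classical
  -- row vectors: truncated moment‐curve rows
  set vrow : ℕ → ι' a b → ℚ := fun x k => (x : ℚ) ^ ((finSumFinEquiv k : Fin (a + b)) : ℕ)
    with hvrow
  set rowsA : Fin m → Fin a → ι' a b → ℚ :=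
    fun i p => vrow ((A i).orderEmbOfFin (hA i) p) with hrowsA
  set rowsB : Fin m → Fin b → ι' a b → ℚ :=
    fun j q => vrow ((B j).orderEmbOfFin (hB j) q) with hrowsB
  set N : Matrix (Fin m) (Fin m) ℚ :=
    Matrix.of fun i j => Matrix.det (Matrix.of (Sum.elim (rowsA i) (rowsB j))) with hN
  -- factorization through the minor matrices
  set U : Matrix (Fin m) (κ' a b) ℚ := Matrix.of fun i T => minorA (rowsA i) T with hU
  set W : Matrix (κ' a b) (Fin m) ℚ := Matrix.of fun T j => sgn T * minorB (rowsB j) T with hW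
  have hfact : N = U * W := by
    ext i j
    rw [Matrix.mul_apply]
    show Matrix.det (Matrix.of (Sum.elim (rowsA i) (rowsB j))) = _
    rw [laplace (rowsB j) (rowsA i)]
    apply Finset.sum_congr rfl
    intro T _
    simp only [hU, hW, Matrix.of_apply]
    ring
  -- N is lower triangular with nonzero diagonal
  have hupper : ∀ i j : Fin m, i < j → N i j = 0 := by
    intro i j hij
    obtain ⟨x, hx⟩ := Finset.nonempty_iff_ne_empty.mpr (hskew i j hij)
    rw [Finset.mem_inter] at hx
    obtain ⟨p, hp⟩ : ∃ p, (A i).orderEmbOfFin (hA i) p = x := by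
      have := Finset.range_orderEmbOfFin (A i) (hA i)
      have hx1 : x ∈ Set.range ((A i).orderEmbOfFin (hA i)) := by rw [this]; exact_mod_cast hx.1
      exact hx1
    obtain ⟨q, hq⟩ : ∃ q, (B j).orderEmbOfFin (hB j) q = x := by
      have := Finset.range_orderEmbOfFin (B j) (hB j)
      have hx2 : x ∈ Set.range ((B j).orderEmbOfFin (hB j)) := by rw [this]; exact_mod_cast hx.2
      exact hx2
    show Matrix.det (Matrix.of (Sum.elim (rowsA i) (rowsB j))) = 0
    apply Matrix.det_zero_of_row_eq
      (show (Sum.inl p : ι' a b) ≠ Sum.inr q by simp)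
    show rowsA i p = rowsB j q
    rw [hrowsA, hrowsB]
    simp only [hp, hq]
  have hdiag : ∀ i : Fin m, N i i ≠ 0 := by
    intro i
    show Matrix.det (Matrix.of (Sum.elim (rowsA i) (rowsB i))) ≠ 0
    -- elements map
    set elt : ι' a b → ℕ :=
      Sum.elim (fun p => (A i).orderEmbOfFin (hA i) p) (fun q => (B i).orderEmbOfFin (hB i) q)
      with helt
    have helt_inj : Function.Injective elt := by
      intro r r' h
      have hnotmem : ∀ (p : Fin a) (q : Fin b),
          ((A i).orderEmbOfFin (hA i) p : ℕ) ≠ (B i).orderEmbOfFin (hB i) q := by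
        intro p q hpq
        have h1 : ((A i).orderEmbOfFin (hA i) p : ℕ) ∈ A i :=
          Finset.orderEmbOfFin_mem (A i) (hA i) p
        have h2 : ((A i).orderEmbOfFin (hA i) p : ℕ) ∈ B i := by
          rw [hpq]; exact Finset.orderEmbOfFin_mem (B i) (hB i) q
        have : ((A i).orderEmbOfFin (hA i) p : ℕ) ∈ A i ∩ B i := Finset.mem_inter.mpr ⟨h1, h2⟩
        rw [hdisj i] at this
        exact absurd this (Finset.notMem_empty _)
      cases r with
      | inl p =>
        cases r' with
        | inl p' =>
          exact congrArg Sum.inl (((A i).orderEmbOfFin (hA i)).injective h)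
        | inr q' => exact absurd h (hnotmem p q')
      | inr q =>
        cases r' with
        | inl p' => exact absurd h.symm (hnotmem p' q)
        | inr q' =>
          exact congrArg Sum.inr (((B i).orderEmbOfFin (hB i)).injective h)
    set w : Fin (a + b) → ℚ := fun r => ((elt (finSumFinEquiv.symm r) : ℕ) : ℚ) with hw
    have hmat : Matrix.of (Sum.elim (rowsA i) (rowsB i))
        = (Matrix.vandermonde w).submatrix finSumFinEquiv finSumFinEquiv := by
      ext r k
      cases r with
      | inl p =>
        simp only [Matrix.of_apply, Sum.elim_inl, Matrix.submatrix_apply,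
          Matrix.vandermonde_apply, hw, Equiv.symm_apply_apply, helt, hrowsA, hvrow]
      | inr q =>
        simp only [Matrix.of_apply, Sum.elim_inr, Matrix.submatrix_apply,
          Matrix.vandermonde_apply, hw, Equiv.symm_apply_apply, helt, hrowsB, hvrow]
    rw [hmat, Matrix.det_submatrix_equiv_self]
    rw [Matrix.det_vandermonde_ne_zero_iff]
    intro r r' h
    rw [hw] at h
    simp only at h
    have h3 : elt (finSumFinEquiv.symm r) = elt (finSumFinEquiv.symm r') := by
      exact_mod_cast h
    exact finSumFinEquiv.symm.injective (helt_inj h3)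
  -- determinant of N is nonzero
  have hNdet : N.det ≠ 0 := by
    have htri : N.BlockTriangular OrderDual.toDual := by
      intro i j hij
      exact hupper i j hij
    rw [Matrix.det_of_lowerTriangular N htri]
    exact Finset.prod_ne_zero_iff.mpr fun i _ => hdiag i
  -- rank argument
  have hrank : N.rank = m := by
    rw [Matrix.rank_of_isUnit N ((Matrix.isUnit_iff_isUnit_det N).mpr hNdet.isUnit)]
    exact Fintype.card_fin m
  have h1 : N.rank ≤ Fintype.card (κ' a b) := by
    rw [hfact]
    exact le_trans (Matrix.rank_mul_le_left U W) (Matrix.rank_le_card_width U)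
  have h2 : Fintype.card (κ' a b) = (a + b).choose b := by
    rw [Fintype.card_finset_len, card_ι, Nat.choose_symm_add]
  omega
end
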